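/- arXiv:1209.0587 — 12 statements merged into one kernel-verified Lean document; each statement's English description precedes it below -/
import Mathlib

section
/- An injective monotone partial self-map α of the integers belongs to 𝓘↗∞(ℤ) (i.e. has cofinite domain and cofinite range) if and only if there exist integers d_α and u_α such that for every integer m ≤ d_α both m−1 and m lie in dom α with α(m−1) = α(m) − 1, and for every integer n ≥ u_α both n and n+1 lie in dom α with α(n+1) = α(n) + 1. -/
/-- A monotone injective partial self-map of `ℤ` with cofinite domain and cofinite range,
encoded as a function `ℤ → Option ℤ` where `none` means "undefined". -/
structure IsMIP (f : ℤ → Option ℤ) : Prop where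
  inj : ∀ ⦃x y a : ℤ⦄, f x = some a → f y = some a → x = y
  mono : ∀ ⦃x y a b : ℤ⦄, f x = some a → f y = some b → x ≤ y → a ≤ b
  cofin_dom : {x : ℤ | f x = none}.Finite
  cofin_ran : {y : ℤ | ∀ x : ℤ, f x ≠ some y}.Finite

/-- The monoid `𝓘↗∞(ℤ)` of monotone injective partial self-maps of `ℤ`
with cofinite domain and cofinite range. -/
def IZ : Type := {f : ℤ → Option ℤ // IsMIP f}

namespace IZ

/-- Composition of partial maps, written left-to-right: `(pcomp f g) x = g (f x)`. -/
def pcomp (f g : ℤ → Option ℤ) : ℤ → Option ℤ := fun x => (f x).bind g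

theorem isMIP_id : IsMIP (fun x : ℤ => some x) := by
  refine ⟨?_, ?_, ?_, ?_⟩
  · intro x y a hx hy; simp_all
  · intro x y a b hx hy h; simp_all
  · simp
  · have : {y : ℤ | ∀ x : ℤ, (fun x : ℤ => some x) x ≠ some y} = ∅ := by
      ext y; simp
    rw [this]; exact Set.finite_empty

theorem isMIP_comp {f g : ℤ → Option ℤ} (hf : IsMIP f) (hg : IsMIP g) :
    IsMIP (pcomp f g) := by
  refine ⟨?_, ?_, ?_, ?_⟩
  · intro x y a hx hy
    rw [pcomp, Option.bind_eq_some_iff] at hx hy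
    obtain ⟨b, hb, hba⟩ := hx
    obtain ⟨c, hc, hca⟩ := hy
    have hbc : b = c := hg.inj hba hca
    subst hbc
    exact hf.inj hb hc
  · intro x y a b hx hy hxy
    rw [pcomp, Option.bind_eq_some_iff] at hx hy
    obtain ⟨p, hp, hpa⟩ := hx
    obtain ⟨q, hq, hqb⟩ := hy
    exact hg.mono hpa hqb (hf.mono hp hq hxy)
  · have hsub : {x : ℤ | pcomp f g x = none} ⊆
        {x : ℤ | f x = none} ∪ f ⁻¹' (Option.some '' {a : ℤ | g a = none}) := by
      intro x hx
      simp only [Set.mem_setOf_eq, pcomp] at hx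
      cases hfx : f x with
      | none => exact Or.inl hfx
      | some a =>
        right
        rw [hfx] at hx
        simp only [Option.bind_some] at hx
        exact ⟨a, hx, hfx.symm⟩
    refine Set.Finite.subset (Set.Finite.union hf.cofin_dom ?_) hsub
    refine Set.Finite.preimage ?_ (hg.cofin_dom.image _)
    intro x hx y hy hxy
    obtain ⟨a, _, ha⟩ := hx
    obtain ⟨b, _, hb⟩ := hy
    have hfa : f x = some a := ha.symm
    have hfb : f y = some b := hb.symm
    have : some a = some b := by rw [← hfa, ← hfb, hxy]
    rw [Option.some_inj] at this
    subst this
    exact hf.inj hfa hfb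
  · have hsub : {y : ℤ | ∀ x : ℤ, pcomp f g x ≠ some y} ⊆
        {y : ℤ | ∀ x : ℤ, g x ≠ some y} ∪
          ((fun a => (g a).getD 0) '' {a : ℤ | ∀ x : ℤ, f x ≠ some a}) := by
      intro y hy
      simp only [Set.mem_setOf_eq] at hy
      by_cases hgy : ∀ a : ℤ, g a ≠ some y
      · exact Or.inl hgy
      · push_neg at hgy
        obtain ⟨a, hga⟩ := hgy
        right
        refine ⟨a, ?_, by simp [hga]⟩
        intro x hfx
        exact hy x (by simp [pcomp, hfx, hga])
    exact Set.Finite.subset (Set.Finite.union hg.cofin_ran (hf.cofin_ran.image _)) hsub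

instance : Monoid IZ where
  one := ⟨fun x => some x, isMIP_id⟩
  mul a b := ⟨pcomp a.1 b.1, isMIP_comp a.2 b.2⟩
  mul_assoc a b c := by
    apply Subtype.ext
    funext x
    exact Option.bind_assoc (a.1 x) b.1 c.1
  one_mul a := by
    apply Subtype.ext
    funext x
    rfl
  mul_one a := by
    apply Subtype.ext
    funext x
    show (a.1 x).bind some = a.1 x
    cases a.1 x <;> rfl

theorem mul_def (a b : IZ) : (a * b).1 = pcomp a.1 b.1 := rfl

theorem one_def : (1 : IZ).1 = fun x : ℤ => some x := rfl

/-- The domain of an element of `𝓘↗∞(ℤ)`. -/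
def dom (a : IZ) : Set ℤ := {x : ℤ | a.1 x ≠ none}

/-- The range of an element of `𝓘↗∞(ℤ)`. -/
def ran (a : IZ) : Set ℤ := {y : ℤ | ∃ x : ℤ, a.1 x = some y}

end IZ

/-- An injective monotone partial self-map `f` of the integers belongs to
`𝓘↗∞(ℤ)` (i.e. additionally has cofinite domain and cofinite range) if and only if
there exist integers `d` and `u` such that for every integer `m ≤ d` both `m - 1` and `m`
lie in the domain with `f (m - 1) = f m - 1`, and for every integer `n ≥ u` both `n` and
`n + 1` lie in the domain with `f (n + 1) = f n + 1`. -/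
theorem statement0 (f : ℤ → Option ℤ)
    (hinj : ∀ ⦃x y a : ℤ⦄, f x = some a → f y = some a → x = y)
    (hmono : ∀ ⦃x y a b : ℤ⦄, f x = some a → f y = some b → x ≤ y → a ≤ b) :
    IsMIP f ↔
      ∃ d u : ℤ,
        (∀ m : ℤ, m ≤ d → ∃ a b : ℤ, f (m - 1) = some a ∧ f m = some b ∧ a = b - 1) ∧
        (∀ n : ℤ, u ≤ n → ∃ a b : ℤ, f n = some a ∧ f (n + 1) = some b ∧ b = a + 1) := by

  have hstrict : ∀ ⦃x y a b : ℤ⦄, f x = some a → f y = some b → x < y → a < b := by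
    intro x y a b hx hy hxy
    rcases lt_or_eq_of_le (hmono hx hy hxy.le) with h | h
    · exact h
    · exact absurd (hinj hx (h ▸ hy)) hxy.ne
  have hstrict2 : ∀ ⦃x y a b : ℤ⦄, f x = some a → f y = some b → a < b → x < y := by
    intro x y a b hx hy hab
    by_contra hxy
    exact absurd (hmono hy hx (not_lt.mp hxy)) (not_le.mpr hab)
  constructor
  · intro h
    obtain ⟨A, hA⟩ := h.cofin_dom.bddAbove
    obtain ⟨A', hA'⟩ := h.cofin_dom.bddBelow
    obtain ⟨B, hB⟩ := h.cofin_ran.bddAbove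
    obtain ⟨B', hB'⟩ := h.cofin_ran.bddBelow
    have hdom_high : ∀ x : ℤ, A < x → ∃ a, f x = some a := by
      intro x hx
      cases hfx : f x with
      | none => exact absurd (hA hfx) (not_le.mpr hx)
      | some a => exact ⟨a, rfl⟩
    have hdom_low : ∀ x : ℤ, x < A' → ∃ a, f x = some a := by
      intro x hx
      cases hfx : f x with
      | none => exact absurd (hA' hfx) (not_le.mpr hx)
      | some a => exact ⟨a, rfl⟩
    have hran_high : ∀ y : ℤ, B < y → ∃ x, f x = some y := by
      intro y hy
      by_contra hne
      push_neg at hne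
      exact absurd (hB hne) (not_le.mpr hy)
    have hran_low : ∀ y : ℤ, y < B' → ∃ x, f x = some y := by
      intro y hy
      by_contra hne
      push_neg at hne
      exact absurd (hB' hne) (not_le.mpr hy)
    obtain ⟨a0, ha0⟩ := hdom_high (A + 1) (by omega)
    obtain ⟨a1, ha1⟩ := hdom_low (A' - 1) (by omega)
    have grow_up : ∀ k : ℕ, ∃ v, f (A + 1 + k) = some v ∧ a0 + k ≤ v := by
      intro k
      induction k with
      | zero => exact ⟨a0, by simpa using ha0, by simp⟩
      | succ k ih =>
        obtain ⟨v, hv, hle⟩ := ih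
        obtain ⟨w, hw⟩ := hdom_high (A + 1 + (k + 1 : ℕ)) (by push_cast; omega)
        have : v < w := hstrict hv hw (by push_cast; omega)
        exact ⟨w, hw, by push_cast at hle ⊢; omega⟩
    have grow_down : ∀ k : ℕ, ∃ v, f (A' - 1 - k) = some v ∧ v ≤ a1 - k := by
      intro k
      induction k with
      | zero => exact ⟨a1, by simpa using ha1, by simp⟩
      | succ k ih =>
        obtain ⟨v, hv, hle⟩ := ih
        obtain ⟨w, hw⟩ := hdom_low (A' - 1 - (k + 1 : ℕ)) (by push_cast; omega)
        have : w < v := hstrict hw hv (by push_cast; omega)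
        exact ⟨w, hw, by push_cast at hle ⊢; omega⟩
    obtain ⟨v, hv, hvle⟩ := grow_up (B + 1 - a0).toNat
    obtain ⟨w, hw, hwle⟩ := grow_down (a1 - (B' - 1)).toNat
    refine ⟨A' - 1 - (a1 - (B' - 1)).toNat, A + 1 + (B + 1 - a0).toNat, ?_, ?_⟩
    · intro m hm
      have hwB : w < B' := by
        have := Int.self_le_toNat (a1 - (B' - 1))
        omega
      obtain ⟨b, hb⟩ := hdom_low m (by omega)
      obtain ⟨a, ha⟩ := hdom_low (m - 1) (by omega)
      have hab : a < b := hstrict ha hb (by omega)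
      have hbw : b ≤ w := hmono hb hw hm
      refine ⟨a, b, ha, hb, ?_⟩
      by_contra hne
      have h2 : a < b - 1 := by omega
      obtain ⟨x, hx⟩ := hran_low (b - 1) (by omega)
      have h3 : m - 1 < x := hstrict2 ha hx h2
      have h4 : x < m := hstrict2 hx hb (by omega)
      omega
    · intro n hn
      have hvB : B < v := by
        have := Int.self_le_toNat (B + 1 - a0)
        omega
      obtain ⟨a, ha⟩ := hdom_high n (by omega)
      obtain ⟨b, hb⟩ := hdom_high (n + 1) (by omega)
      have hab : a < b := hstrict ha hb (by omega)
      have hva : v ≤ a := hmono hv ha hn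
      refine ⟨a, b, ha, hb, ?_⟩
      by_contra hne
      have h2 : a + 1 < b := by omega
      obtain ⟨x, hx⟩ := hran_high (a + 1) (by omega)
      have h3 : n < x := hstrict2 ha hx (by omega)
      have h4 : x < n + 1 := hstrict2 hx hb h2
      omega
  · rintro ⟨d, u, hd, hu⟩
    obtain ⟨_, B, _, hfd, _⟩ := hd d le_rfl
    obtain ⟨U, _, hfu, _, _⟩ := hu u le_rfl
    have low : ∀ k : ℕ, f (d - k) = some (B - k) := by
      intro k
      induction k with
      | zero => simpa using hfd
      | succ k ih =>
        obtain ⟨a, b, ha, hb, hab⟩ := hd (d - k) (by omega)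
        have hbB : b = B - k := by
          rw [ih] at hb; exact (Option.some_inj.mp hb).symm
        have : (d : ℤ) - (k + 1 : ℕ) = d - k - 1 := by push_cast; ring
        rw [this, ha, hab, hbB]
        congr 1
        push_cast; ring
    have high : ∀ k : ℕ, f (u + k) = some (U + k) := by
      intro k
      induction k with
      | zero => simpa using hfu
      | succ k ih =>
        obtain ⟨a, b, ha, hb, hab⟩ := hu (u + k) (by omega)
        have haU : a = U + k := by
          rw [ih] at ha; exact (Option.some_inj.mp ha).symm
        have : (u : ℤ) + (k + 1 : ℕ) = u + k + 1 := by push_cast; ring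
        rw [this, hb, hab, haU]
        congr 1
        push_cast; ring
    refine ⟨hinj, hmono, ?_, ?_⟩
    · refine Set.Finite.subset (Set.finite_Icc d u) ?_
      intro x hx
      simp only [Set.mem_setOf_eq] at hx
      rcases le_or_gt x d with h1 | h1
      · obtain ⟨a, b, _, hb, _⟩ := hd x h1
        rw [hx] at hb; exact absurd hb (by simp)
      rcases le_or_gt u x with h2 | h2
      · obtain ⟨a, b, ha, _, _⟩ := hu x h2
        rw [hx] at ha; exact absurd ha (by simp)
      exact Set.mem_Icc.mpr ⟨by omega, by omega⟩
    · refine Set.Finite.subset (Set.finite_Icc B U) ?_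
      intro y hy
      simp only [Set.mem_setOf_eq] at hy
      rcases le_or_gt y B with h1 | h1
      · have := low (B - y).toNat
        rw [Int.toNat_of_nonneg (by omega)] at this
        have : f (d - (B - y)) = some y := by rw [this]; congr 1; ring
        exact absurd this (hy _)
      rcases le_or_gt U y with h2 | h2
      · have := high (y - U).toNat
        rw [Int.toNat_of_nonneg (by omega)] at this
        have : f (u + (y - U)) = some y := by rw [this]; congr 1; ring
        exact absurd this (hy _)
      exact Set.mem_Icc.mpr ⟨by omega, by omega⟩
end

section
/- An element α of 𝓘↗∞(ℤ) belongs to the group of units H(𝕀) (i.e. α is invertible in the monoid) if and only if dom α = ℤ and α(n+1) = α(n) + 1 for every integer n. -/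
/-- An element `α` of `𝓘↗∞(ℤ)` is invertible in the monoid (belongs to the
group of units `H(𝕀)`) if and only if `dom α = ℤ` and `α (n + 1) = α n + 1` for every
integer `n`. -/
theorem statement1 (α : IZ) :
    IsUnit α ↔ (IZ.dom α = Set.univ ∧
      ∀ n : ℤ, ∃ a : ℤ, α.1 n = some a ∧ α.1 (n + 1) = some (a + 1)) := by
  constructor
  · rintro ⟨u, rfl⟩
    set α : IZ := (u : IZ) with hα
    set β : IZ := ((u⁻¹ : IZˣ) : IZ) with hβ
    have h1 : ∀ x : ℤ, (α.1 x).bind β.1 = some x := by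
      intro x
      have := congrFun (congrArg Subtype.val u.mul_inv) x
      exact this
    have h2 : ∀ y : ℤ, (β.1 y).bind α.1 = some y := by
      intro y
      have := congrFun (congrArg Subtype.val u.inv_mul) y
      exact this
    -- totality
    have htot : ∀ x : ℤ, ∃ a : ℤ, α.1 x = some a := by
      intro x
      cases hx : α.1 x with
      | none => have := h1 x; rw [hx] at this; simp at this
      | some a => exact ⟨a, rfl⟩
    -- surjectivity
    have hsurj : ∀ y : ℤ, ∃ z : ℤ, α.1 z = some y := by
      intro y
      have := h2 y
      cases hy : β.1 y with
      | none => rw [hy] at this; simp at this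
      | some z => rw [hy] at this; exact ⟨z, this⟩
    -- the function form
    set A : ℤ → ℤ := fun n => (α.1 n).getD 0 with hA
    have hAn : ∀ n : ℤ, α.1 n = some (A n) := by
      intro n
      obtain ⟨a, ha⟩ := htot n
      simp [hA, ha]
    have hmono : ∀ {x y : ℤ}, x ≤ y → A x ≤ A y := by
      intro x y hxy
      exact α.2.mono (hAn x) (hAn y) hxy
    have hinj : ∀ {x y : ℤ}, A x = A y → x = y := by
      intro x y h
      exact α.2.inj (hAn x) (h ▸ hAn y)
    have hstrict : ∀ {x y : ℤ}, x < y → A x < A y := by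
      intro x y hxy
      rcases lt_or_eq_of_le (hmono hxy.le) with h | h
      · exact h
      · exact absurd (hinj h) hxy.ne
    constructor
    · ext x
      simp only [IZ.dom, Set.mem_setOf_eq, Set.mem_univ, iff_true]
      rw [hAn x]; simp
    · intro n
      refine ⟨A n, hAn n, ?_⟩
      obtain ⟨z, hz⟩ := hsurj (A n + 1)
      have hzA : A z = A n + 1 := by
        have := hAn z; rw [hz] at this; exact (Option.some_inj.mp this).symm
      have h1le : A n + 1 ≤ A (n + 1) := hstrict (by omega)
      have : A (n + 1) = A n + 1 := by
        by_contra hne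
        have hlt : A z < A (n + 1) := by omega
        have hgt : A n < A z := by omega
        have hz1 : z < n + 1 := by
          by_contra h
          push_neg at h
          exact absurd (hmono h) (by omega)
        have hz2 : n < z := by
          by_contra h
          push_neg at h
          exact absurd (hmono h) (by omega)
        omega
      rw [← this]; exact hAn (n + 1)
  · rintro ⟨hdom, hshift⟩
    have htot : ∀ n : ℤ, α.1 n ≠ none := by
      intro n
      have : n ∈ IZ.dom α := by rw [hdom]; trivial
      exact this
    set A : ℤ → ℤ := fun n => (α.1 n).getD 0 with hA
    have hAn : ∀ n : ℤ, α.1 n = some (A n) := by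
      intro n
      cases hx : α.1 n with
      | none => exact absurd hx (htot n)
      | some a => simp [hA, hx]
    have hstep : ∀ n : ℤ, A (n + 1) = A n + 1 := by
      intro n
      obtain ⟨a, ha, ha1⟩ := hshift n
      have h1 : A n = a := by
        have := hAn n; rw [ha] at this; exact Option.some_inj.mp this.symm
      have h2 : A (n + 1) = a + 1 := by
        have := hAn (n + 1); rw [ha1] at this; exact Option.some_inj.mp this.symm
      omega
    have hlin : ∀ n : ℤ, A n = A 0 + n := by
      intro n
      induction n using Int.induction_on with
      | zero => simp
      | succ k ih => rw [hstep k, ih]; ring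
      | pred k ih =>
        have := hstep (-(k : ℤ) - 1)
        simp only [sub_add_cancel] at this
        omega
    set c : ℤ := A 0 with hc
    have hβmip : IsMIP (fun x : ℤ => some (x - c)) := by
      refine ⟨?_, ?_, ?_, ?_⟩
      · intro x y a hx hy
        simp only [Option.some_inj] at hx hy
        omega
      · intro x y a b hx hy h
        simp only [Option.some_inj] at hx hy
        omega
      · simp
      · have : {y : ℤ | ∀ x : ℤ, (fun x : ℤ => some (x - c)) x ≠ some y} = ∅ := by
          ext y
          simp only [Set.mem_setOf_eq, Set.mem_empty_iff_false, iff_false]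
          push_neg
          exact ⟨y + c, by simp⟩
        rw [this]; exact Set.finite_empty
    set β : IZ := ⟨fun x : ℤ => some (x - c), hβmip⟩ with hβ
    refine ⟨⟨α, β, ?_, ?_⟩, rfl⟩
    · apply Subtype.ext
      funext x
      show (α.1 x).bind β.1 = some x
      rw [hAn x, hlin x]
      simp [hβ]
    · apply Subtype.ext
      funext y
      show (β.1 y).bind α.1 = some y
      have : β.1 y = some (y - c) := rfl
      rw [this]
      simp only [Option.bind_some]
      rw [hAn (y - c), hlin (y - c)]
      simp
end

section
/- Two elements α, β of the monoid 𝓘↗∞(ℤ) are Green 𝓡-equivalent (i.e. α·𝓘↗∞(ℤ) ∪ {α} = β·𝓘↗∞(ℤ) ∪ {β} as right ideals, equivalently there exist χ, ζ in the monoid with α·χ = β and β·ζ = α) if and only if dom α = dom β. -/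
lemma IZ.exists_chi (α β : IZ) (h : IZ.dom α = IZ.dom β) : ∃ χ : IZ, α * χ = β := by
  classical
  set χf : ℤ → Option ℤ := fun y =>
    if h : ∃ x : ℤ, α.1 x = some y then β.1 h.choose else none with hχf
  have key : ∀ {x y : ℤ}, α.1 x = some y → χf y = β.1 x := by
    intro x y hxy
    have hex : ∃ x : ℤ, α.1 x = some y := ⟨x, hxy⟩
    have : hex.choose = x := α.2.inj hex.choose_spec hxy
    simp [hχf, dif_pos hex, this]
  have hle : ∀ {x x' y y' : ℤ}, α.1 x = some y → α.1 x' = some y' → y ≤ y' → x ≤ x' := by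
    intro x x' y y' hx hx' hyy
    by_contra hlt
    push_neg at hlt
    have h1 : y' ≤ y := α.2.mono hx' hx hlt.le
    have : y = y' := le_antisymm hyy h1
    subst this
    exact absurd (α.2.inj hx hx') (by omega)
  have hmip : IsMIP χf := by
    refine ⟨?_, ?_, ?_, ?_⟩
    · intro y y' a hy hy'
      simp only [hχf] at hy hy'
      split_ifs at hy hy' with h1 h2
      have hx1 := h1.choose_spec
      have hx2 := h2.choose_spec
      have : h1.choose = h2.choose := β.2.inj hy hy'
      rw [this] at hx1
      rw [hx1] at hx2
      exact (Option.some_inj.mp hx2)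
    · intro y y' a b hy hy' hyy
      simp only [hχf] at hy hy'
      split_ifs at hy hy' with h1 h2
      exact β.2.mono hy hy' (hle h1.choose_spec h2.choose_spec hyy)
    · refine α.2.cofin_ran.subset ?_
      intro y hy
      simp only [Set.mem_setOf_eq] at hy ⊢
      intro x hx
      rw [key hx] at hy
      have : x ∈ IZ.dom α := by simp [IZ.dom, hx]
      rw [h] at this
      exact this hy
    · refine (Set.Finite.union β.2.cofin_ran
        (α.2.cofin_dom.image (fun x => (β.1 x).getD 0))).subset ?_
      intro b hb
      simp only [Set.mem_setOf_eq] at hb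
      by_cases hbr : ∀ x : ℤ, β.1 x ≠ some b
      · exact Or.inl hbr
      · push_neg at hbr
        obtain ⟨x, hx⟩ := hbr
        right
        refine ⟨x, ?_, by simp [hx]⟩
        by_contra hax
        simp only [Set.mem_setOf_eq] at hax
        obtain ⟨y, hy⟩ := Option.ne_none_iff_exists'.mp hax
        exact hb y (by rw [key hy, hx])
  refine ⟨⟨χf, hmip⟩, ?_⟩
  apply Subtype.ext
  funext x
  show (α.1 x).bind χf = β.1 x
  cases hax : α.1 x with
  | none =>
    have : x ∉ IZ.dom α := by simp [IZ.dom, hax]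
    rw [h] at this
    simp only [IZ.dom, Set.mem_setOf_eq, not_not] at this
    simp [this]
  | some y => simp [key hax]

/-- Two elements `α, β` of `𝓘↗∞(ℤ)` are Green `𝓡`-equivalent
(there exist `χ, ζ` with `α * χ = β` and `β * ζ = α`) if and only if
`dom α = dom β`. -/
theorem statement5 (α β : IZ) :
    (∃ χ ζ : IZ, α * χ = β ∧ β * ζ = α) ↔ IZ.dom α = IZ.dom β := by
  constructor
  · rintro ⟨χ, ζ, hχ, hζ⟩
    have sub : ∀ (a b : IZ) (c : IZ), a * c = b → IZ.dom b ⊆ IZ.dom a := by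
      intro a b c hc x hx
      simp only [IZ.dom, Set.mem_setOf_eq] at hx ⊢
      rw [← hc] at hx
      intro han
      apply hx
      show (a.1 x).bind c.1 = none
      simp [han]
    exact Set.Subset.antisymm (sub β α ζ hζ) (sub α β χ hχ)
  · intro h
    obtain ⟨χ, hχ⟩ := IZ.exists_chi α β h
    obtain ⟨ζ, hζ⟩ := IZ.exists_chi β α h.symm
    exact ⟨χ, ζ, hχ, hζ⟩
end

section
/- The monoid 𝓘↗∞(ℤ) is a simple semigroup: for all elements γ and φ of 𝓘↗∞(ℤ) there exist κ, ξ ∈ 𝓘↗∞(ℤ) such that κ·φ·ξ = γ. Consequently it has no proper two-sided ideals. -/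
theorem IsMIP.le_of_le {f : ℤ → Option ℤ} (hf : IsMIP f) {x y a b : ℤ}
    (hx : f x = some a) (hy : f y = some b) (hab : a ≤ b) : x ≤ y := by
  by_contra h
  push_neg at h
  have hba := hf.mono hy hx h.le
  have hab' : a = b := le_antisymm hab hba
  subst hab'
  have := hf.inj hx hy
  omega

theorem IZ.simple (γ φ : IZ) : ∃ κ ξ : IZ, κ * φ * ξ = γ := by
  classical
  obtain ⟨U, hU⟩ := φ.2.cofin_dom.bddAbove
  obtain ⟨L, hL⟩ := φ.2.cofin_dom.bddBelow
  set N : ℤ := max (max U (-L)) 0 + 1 with hNdef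
  have hNU : U < N := by
    have h1 := le_max_left (max U (-L)) 0; have h2 := le_max_left U (-L); omega
  have hNL : -N < L := by
    have h1 := le_max_left (max U (-L)) 0; have h2 := le_max_right U (-L); omega
  have hN0 : 0 < N := by have := le_max_right (max U (-L)) 0; omega
  set k : ℤ → ℤ := fun x => if 0 ≤ x then x + N else x - N with hk
  have hkmono : ∀ {x y : ℤ}, x ≤ y → k x ≤ k y := by
    intro x y h; simp only [hk]; split <;> split <;> omega
  have hkinj : ∀ {x y : ℤ}, k x = k y → x = y := by
    intro x y h; simp only [hk] at h; split at h <;> split at h <;> omega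
  have hkdom : ∀ x : ℤ, φ.1 (k x) ≠ none := by
    intro x h
    have hx : k x ∈ {x : ℤ | φ.1 x = none} := h
    rcases le_or_gt 0 x with hx0 | hx0
    · have h1 := hU hx; simp only [hk, if_pos hx0] at h1; omega
    · have h2 := hL hx; simp only [hk, if_neg (not_le.2 hx0)] at h2; omega
  have hκ : IsMIP (fun x : ℤ => some (k x)) := by
    refine ⟨?_, ?_, ?_, ?_⟩
    · intro x y a hx hy
      simp only [Option.some_inj] at hx hy
      exact hkinj (hx.trans hy.symm)
    · intro x y a b hx hy hxy
      simp only [Option.some_inj] at hx hy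
      subst hx; subst hy
      exact hkmono hxy
    · simp
    · apply Set.Finite.subset (Set.finite_Icc (-N) N)
      intro y hy
      simp only [Set.mem_setOf_eq, ne_eq, Option.some_inj] at hy
      simp only [Set.mem_Icc]
      by_contra hcon
      push_neg at hcon
      rcases le_or_gt (-N) y with h1 | h1
      · have h2 := hcon h1
        exact hy (y - N) (by simp only [hk, Option.some_inj]; split <;> omega)
      · exact hy (y + N) (by simp only [hk, Option.some_inj]; split <;> omega)
  set κel : IZ := ⟨fun x => some (k x), hκ⟩ with hκel
  set ψ : IZ := κel * φ with hψ
  have hψx : ∀ x : ℤ, ψ.1 x = φ.1 (k x) := fun x => rfl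
  have hψtot : ∀ x : ℤ, ∃ z, ψ.1 x = some z := by
    intro x
    rw [hψx]
    cases h : φ.1 (k x) with
    | none => exact absurd h (hkdom x)
    | some z => exact ⟨z, rfl⟩
  set ξf : ℤ → Option ℤ :=
    fun y => if h : ∃ x, ψ.1 x = some y then γ.1 h.choose else none with hξf
  have hξapp : ∀ {x y : ℤ}, ψ.1 x = some y → ξf y = γ.1 x := by
    intro x y hxy
    have hex : ∃ x, ψ.1 x = some y := ⟨x, hxy⟩
    simp only [hξf, dif_pos hex]
    exact congrArg γ.1 (ψ.2.inj hex.choose_spec hxy)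
  have hξ : IsMIP ξf := by
    refine ⟨?_, ?_, ?_, ?_⟩
    · intro y1 y2 a h1 h2
      simp only [hξf] at h1 h2
      split at h1
      swap
      · exact absurd h1 (by simp)
      split at h2
      swap
      · exact absurd h2 (by simp)
      rename_i hex1 hex2
      have hcc := γ.2.inj h1 h2
      have e1 := hex1.choose_spec
      have e2 := hex2.choose_spec
      rw [hcc] at e1
      exact Option.some_inj.mp (e1.symm.trans e2)
    · intro y1 y2 a b h1 h2 hy
      simp only [hξf] at h1 h2
      split at h1
      swap
      · exact absurd h1 (by simp)
      split at h2
      swap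
      · exact absurd h2 (by simp)
      rename_i hex1 hex2
      exact γ.2.mono h1 h2 (ψ.2.le_of_le hex1.choose_spec hex2.choose_spec hy)
    · apply Set.Finite.subset (Set.Finite.union ψ.2.cofin_ran
        (γ.2.cofin_dom.image (fun x => (ψ.1 x).getD 0)))
      intro y hy
      simp only [Set.mem_setOf_eq, hξf] at hy
      split at hy
      · rename_i hex
        right
        exact ⟨hex.choose, hy, by show (ψ.1 hex.choose).getD 0 = y; rw [hex.choose_spec]; rfl⟩
      · rename_i hex
        left
        push_neg at hex
        exact hex
    · apply Set.Finite.subset γ.2.cofin_ran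
      intro y hy
      simp only [Set.mem_setOf_eq, ne_eq] at hy ⊢
      intro x hx
      obtain ⟨z, hz⟩ := hψtot x
      exact hy z (by rw [hξapp hz, hx])
  refine ⟨κel, ⟨ξf, hξ⟩, ?_⟩
  apply Subtype.ext
  funext x
  show (ψ.1 x).bind ξf = γ.1 x
  obtain ⟨z, hz⟩ := hψtot x
  rw [hz, Option.bind_some, hξapp hz]

/-- The monoid `𝓘↗∞(ℤ)` is a simple semigroup: for all `γ, φ` there are
`κ, ξ` with `κ * φ * ξ = γ`; consequently it has no proper two-sided ideals. -/
theorem statement7 :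
    (∀ γ φ : IZ, ∃ κ ξ : IZ, κ * φ * ξ = γ) ∧
      ∀ I : Set IZ, I.Nonempty → (∀ a ∈ I, ∀ s : IZ, s * a ∈ I ∧ a * s ∈ I) →
        I = Set.univ := by
  refine ⟨fun γ φ => IZ.simple γ φ, ?_⟩
  intro I hne hI
  obtain ⟨a, ha⟩ := hne
  ext γ
  simp only [Set.mem_univ, iff_true]
  obtain ⟨κ, ξ, h⟩ := IZ.simple γ a
  have h1 := (hI a ha κ).1
  have h2 := (hI _ h1 ξ).2
  rwa [h] at h2
end

section
/- For all idempotents ε and φ of 𝓘↗∞(ℤ), the set of pairs (α, β) of elements of 𝓘↗∞(ℤ) satisfying α·β = ε and β·α = φ is infinite. -/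
section Aux

noncomputable def rr (F : Finset ℤ) (x : ℤ) : ℤ := x - (F.filter (· ≤ x)).card

lemma rr_step (F : Finset ℤ) (x : ℤ) :
    rr F (x + 1) = rr F x + (if x + 1 ∈ F then 0 else 1) := by
  have hcard : (F.filter (· ≤ x + 1)).card
      = (F.filter (· ≤ x)).card + (if x + 1 ∈ F then 1 else 0) := by
    by_cases h : x + 1 ∈ F
    · have he : F.filter (· ≤ x + 1) = insert (x + 1) (F.filter (· ≤ x)) := by
        ext t
        simp only [Finset.mem_filter, Finset.mem_insert]
        constructor
        · rintro ⟨ht, hle⟩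
          by_cases h1 : t = x + 1
          · exact Or.inl h1
          · exact Or.inr ⟨ht, by omega⟩
        · rintro (rfl | ⟨ht, hle⟩)
          · exact ⟨h, le_refl _⟩
          · exact ⟨ht, by omega⟩
      rw [he, Finset.card_insert_of_notMem, if_pos h]
      simp only [Finset.mem_filter]
      push_neg
      intro _
      omega
    · rw [if_neg h, add_zero]
      congr 1
      ext t
      simp only [Finset.mem_filter]
      constructor
      · rintro ⟨ht, hle⟩
        refine ⟨ht, ?_⟩
        by_cases h1 : t = x + 1
        · exact absurd (h1 ▸ ht) h
        · omega
      · rintro ⟨ht, hle⟩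
        exact ⟨ht, by omega⟩
  unfold rr
  rw [hcard]
  by_cases h : x + 1 ∈ F <;> simp [h] <;> push_cast <;> ring

lemma rr_mono (F : Finset ℤ) : Monotone (rr F) := by
  intro x y hxy
  have hsub : F.filter (· ≤ y) ⊆ F.filter (· ≤ x) ∪ Finset.Ioc x y := by
    intro t ht
    simp only [Finset.mem_filter] at ht
    simp only [Finset.mem_union, Finset.mem_filter, Finset.mem_Ioc]
    by_cases h : t ≤ x
    · exact Or.inl ⟨ht.1, h⟩
    · exact Or.inr ⟨by omega, ht.2⟩
  have hc := Finset.card_le_card hsub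
  have hc2 := Finset.card_union_le (F.filter (· ≤ x)) (Finset.Ioc x y)
  have hIoc : (Finset.Ioc x y).card = (y - x).toNat := Int.card_Ioc x y
  have h1 : ((F.filter (· ≤ y)).card : ℤ) ≤ ((F.filter (· ≤ x)).card : ℤ) + (y - x) := by
    have := hIoc ▸ le_trans hc hc2
    omega
  unfold rr
  omega

lemma rr_succ_le (F : Finset ℤ) (x : ℤ) : rr F (x + 1) ≤ rr F x + 1 := by
  rw [rr_step]; split <;> omega

lemma rr_lt (F : Finset ℤ) {x y : ℤ} (hxy : x < y) (hy : y ∉ F) : rr F x < rr F y := by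
  have h1 : rr F y = rr F (y - 1) + 1 := by
    have hs := rr_step F (y - 1)
    have h2 : y - 1 + 1 = y := by ring
    rw [h2, if_neg hy] at hs
    omega
  have h3 : rr F x ≤ rr F (y - 1) := rr_mono F (by omega)
  omega

lemma rr_le_self (F : Finset ℤ) (x : ℤ) : rr F x ≤ x := by
  have : (0 : ℤ) ≤ ((F.filter (· ≤ x)).card : ℤ) := Int.natCast_nonneg _
  unfold rr; omega

lemma rr_ge (F : Finset ℤ) (x : ℤ) : x - F.card ≤ rr F x := by
  have h := Finset.card_filter_le F (· ≤ x)
  have : ((F.filter (· ≤ x)).card : ℤ) ≤ (F.card : ℤ) := by exact_mod_cast h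
  unfold rr; omega

noncomputable def gg (F : Finset ℤ) (m : ℤ) : ℤ := sInf {x : ℤ | m ≤ rr F x}

lemma gg_set_nonempty (F : Finset ℤ) (m : ℤ) : {x : ℤ | m ≤ rr F x}.Nonempty := by
  refine ⟨m + F.card, ?_⟩
  have := rr_ge F (m + F.card)
  simp only [Set.mem_setOf_eq]
  omega

lemma gg_set_bdd (F : Finset ℤ) (m : ℤ) : BddBelow {x : ℤ | m ≤ rr F x} :=
  ⟨m, fun x hx => le_trans (le_trans hx (rr_le_self F x)) (le_refl _)⟩

lemma gg_spec (F : Finset ℤ) (m : ℤ) : m ≤ rr F (gg F m) :=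
  Int.csInf_mem (gg_set_nonempty F m) (gg_set_bdd F m)

lemma gg_le (F : Finset ℤ) {m x : ℤ} (h : m ≤ rr F x) : gg F m ≤ x :=
  csInf_le (gg_set_bdd F m) h

lemma rr_gg (F : Finset ℤ) (m : ℤ) : rr F (gg F m) = m := by
  have h1 := gg_spec F m
  have h2 : rr F (gg F m - 1) < m := by
    by_contra h
    push_neg at h
    have := gg_le F h
    omega
  have h3 := rr_succ_le F (gg F m - 1)
  have h4 : gg F m - 1 + 1 = gg F m := by ring
  rw [h4] at h3
  omega

lemma gg_not_mem (F : Finset ℤ) (m : ℤ) : gg F m ∉ F := by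
  intro h
  have hs := rr_step F (gg F m - 1)
  have h4 : gg F m - 1 + 1 = gg F m := by ring
  rw [h4, if_pos h] at hs
  have h1 := rr_gg F m
  have h2 : m ≤ rr F (gg F m - 1) := by omega
  have := gg_le F h2
  omega

lemma gg_rr (F : Finset ℤ) {x : ℤ} (hx : x ∉ F) : gg F (rr F x) = x := by
  have h1 : gg F (rr F x) ≤ x := gg_le F (le_refl _)
  rcases lt_or_eq_of_le h1 with h | h
  · have := rr_lt F h hx
    rw [rr_gg] at this
    omega
  · exact h

lemma gg_inj (F : Finset ℤ) : Function.Injective (gg F) := fun m m' h => by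
  have := rr_gg F m
  rw [h, rr_gg] at this
  omega

lemma gg_mono (F : Finset ℤ) {m m' : ℤ} (h : m ≤ m') : gg F m ≤ gg F m' :=
  gg_le F (by rw [rr_gg]; exact h)

end Aux

noncomputable def mk (F G : Finset ℤ) (n : ℤ) : ℤ → Option ℤ :=
  fun x => if x ∈ F then none else some (gg G (rr F x + n))

lemma mk_eq_some {F G : Finset ℤ} {n x : ℤ} (hx : x ∉ F) :
    mk F G n x = some (gg G (rr F x + n)) := by simp [mk, hx]

lemma rr_inj_off (F : Finset ℤ) {x y : ℤ} (hx : x ∉ F) (hy : y ∉ F)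
    (h : rr F x = rr F y) : x = y := by
  rcases lt_trichotomy x y with h1 | h1 | h1
  · have := rr_lt F h1 hy; omega
  · exact h1
  · have := rr_lt F h1 hx; omega

lemma mk_isMIP (F G : Finset ℤ) (n : ℤ) : IsMIP (mk F G n) := by
  refine ⟨?_, ?_, ?_, ?_⟩
  · intro x y a hx hy
    by_cases h1 : x ∈ F
    · simp [mk, h1] at hx
    by_cases h2 : y ∈ F
    · simp [mk, h2] at hy
    rw [mk_eq_some h1] at hx
    rw [mk_eq_some h2] at hy
    have h3 : gg G (rr F x + n) = gg G (rr F y + n) := by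
      rw [Option.some_inj] at hx hy; rw [hx, hy]
    have h4 := gg_inj G h3
    exact rr_inj_off F h1 h2 (by omega)
  · intro x y a b hx hy hxy
    by_cases h1 : x ∈ F
    · simp [mk, h1] at hx
    by_cases h2 : y ∈ F
    · simp [mk, h2] at hy
    rw [mk_eq_some h1, Option.some_inj] at hx
    rw [mk_eq_some h2, Option.some_inj] at hy
    rw [← hx, ← hy]
    exact gg_mono G (by have := rr_mono F hxy; omega)
  · have : {x : ℤ | mk F G n x = none} ⊆ ↑F := by
      intro x hx
      simp only [Set.mem_setOf_eq, mk] at hx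
      by_cases h : x ∈ F
      · exact h
      · simp [h] at hx
    exact Set.Finite.subset F.finite_toSet this
  · have : {y : ℤ | ∀ x : ℤ, mk F G n x ≠ some y} ⊆ ↑G := by
      intro y hy
      simp only [Set.mem_setOf_eq] at hy
      by_contra h
      apply hy (gg F (rr G y - n))
      rw [mk_eq_some (gg_not_mem F _), rr_gg]
      have : rr G y - n + n = rr G y := by ring
      rw [this, gg_rr G h]
    exact Set.Finite.subset G.finite_toSet this

lemma mk_comp (F G : Finset ℤ) (n : ℤ) :
    IZ.pcomp (mk F G n) (mk G F (-n)) = fun x => if x ∈ F then none else some x := by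
  funext x
  by_cases h : x ∈ F
  · simp [IZ.pcomp, mk, h]
  · rw [if_neg h]
    have h1 : IZ.pcomp (mk F G n) (mk G F (-n)) x
        = mk G F (-n) (gg G (rr F x + n)) := by
      rw [IZ.pcomp, mk_eq_some h, Option.bind_some]
    rw [h1, mk_eq_some (gg_not_mem G _), rr_gg]
    have h2 : rr F x + n + -n = rr F x := by ring
    rw [h2, gg_rr F h]

lemma mk_comp' (F G : Finset ℤ) (n : ℤ) :
    IZ.pcomp (mk G F (-n)) (mk F G n) = fun x => if x ∈ G then none else some x := by
  have h := mk_comp G F (-n)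
  rwa [neg_neg] at h

lemma idem_eq (ε : IZ) (hε : ε * ε = ε) :
    ε.1 = fun x => if x ∈ ε.2.cofin_dom.toFinset then none else some x := by
  funext x
  by_cases h : x ∈ ε.2.cofin_dom.toFinset
  · rw [if_pos h]
    exact ε.2.cofin_dom.mem_toFinset.mp h
  · rw [if_neg h]
    have hne : ε.1 x ≠ none := fun hc => h (ε.2.cofin_dom.mem_toFinset.mpr hc)
    obtain ⟨y, hy⟩ := Option.ne_none_iff_exists'.mp hne
    have hxy : (ε * ε).1 x = ε.1 x := by rw [hε]
    rw [IZ.mul_def, IZ.pcomp, hy, Option.bind_some] at hxy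
    have hx2 : x = y := ε.2.inj hy hxy
    rw [hy, hx2]

/-- For all idempotents `ε, φ` of `𝓘↗∞(ℤ)`, the set of pairs `(α, β)` with
`α * β = ε` and `β * α = φ` is infinite. -/
theorem statement8 (ε φ : IZ) (hε : ε * ε = ε) (hφ : φ * φ = φ) :
    {p : IZ × IZ | p.1 * p.2 = ε ∧ p.2 * p.1 = φ}.Infinite := by
  classical
  set F := ε.2.cofin_dom.toFinset with hF
  set G := φ.2.cofin_dom.toFinset with hG
  have hεeq := idem_eq ε hε
  have hφeq := idem_eq φ hφ
  apply Set.infinite_of_injective_forall_mem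
    (f := fun n : ℤ =>
      ((⟨mk F G n, mk_isMIP F G n⟩ : IZ), (⟨mk G F (-n), mk_isMIP G F (-n)⟩ : IZ)))
  · intro n m h
    have h1 : mk F G n = mk F G m := congrArg Subtype.val (congrArg Prod.fst h)
    have h2 := congrFun h1 (gg F 0)
    rw [mk_eq_some (gg_not_mem F _), mk_eq_some (gg_not_mem F _), rr_gg,
      Option.some_inj, zero_add, zero_add] at h2
    have h3 := gg_inj G h2
    omega
  · intro n
    constructor
    · apply Subtype.ext
      show IZ.pcomp (mk F G n) (mk G F (-n)) = ε.1
      rw [mk_comp, hεeq]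
    · apply Subtype.ext
      show IZ.pcomp (mk G F (-n)) (mk F G n) = φ.1
      rw [mk_comp', hφeq]
end

section
/- The group of units H(𝕀) of the monoid 𝓘↗∞(ℤ) is isomorphic to the additive group ℤ of integers; an isomorphism is given by α ↦ α(n) − n (this value being independent of n ∈ ℤ). -/
theorem isMIP_tr (c : ℤ) : IsMIP (fun n : ℤ => some (n + c)) := by
  refine ⟨?_, ?_, ?_, ?_⟩
  · intro x y a hx hy; simp_all; omega
  · intro x y a b hx hy h; simp_all; omega
  · simp
  · have : {y : ℤ | ∀ x : ℤ, (fun n : ℤ => some (n + c)) x ≠ some y} = ∅ := by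
      ext y; simp only [Set.mem_setOf_eq, ne_eq, Option.some_inj, Set.mem_empty_iff_false,
        iff_false, not_forall, not_not]
      exact ⟨y - c, by ring⟩
    rw [this]; exact Set.finite_empty

/-- Translation by `c` as an element of `IZ`. -/
def tr (c : ℤ) : IZ := ⟨fun n => some (n + c), isMIP_tr c⟩

theorem tr_mul (c d : ℤ) : tr c * tr d = tr (c + d) := by
  apply Subtype.ext
  funext n
  show (some (n + c)).bind (fun m => some (m + d)) = some (n + (c + d))
  simp only [Option.bind_some, Option.some_inj]
  ring

theorem tr_zero : tr 0 = 1 := by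
  apply Subtype.ext
  funext n
  show some (n + 0) = some n
  rw [add_zero]

/-- Translation by `c` as a unit of `IZ`. -/
def trUnit (c : ℤ) : Units IZ :=
  ⟨tr c, tr (-c), by rw [tr_mul]; simp [tr_zero], by rw [tr_mul]; simp [tr_zero]⟩

theorem unit_eq_add (u : Units IZ) : ∃ c : ℤ, ∀ n : ℤ, (u : IZ).1 n = some (n + c) := by
  have htot : ∀ n : ℤ, ∃ a, (u : IZ).1 n = some a := by
    intro n
    have h1 : ((u : IZ) * ((u⁻¹ : Units IZ) : IZ)).1 n = some n := by
      rw [u.mul_inv]; rfl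
    rw [IZ.mul_def] at h1
    simp only [IZ.pcomp, Option.bind_eq_some_iff] at h1
    obtain ⟨a, ha, _⟩ := h1
    exact ⟨a, ha⟩
  choose f hf using htot
  have hsurj : ∀ y : ℤ, ∃ x, f x = y := by
    intro y
    have h1 : (((u⁻¹ : Units IZ) : IZ) * (u : IZ)).1 y = some y := by
      rw [u.inv_mul]; rfl
    rw [IZ.mul_def] at h1
    simp only [IZ.pcomp, Option.bind_eq_some_iff] at h1
    obtain ⟨a, _, hay⟩ := h1
    refine ⟨a, ?_⟩
    have := hf a
    rw [this] at hay
    exact Option.some_inj.mp hay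
  have hsm : StrictMono f := by
    intro x y hxy
    have hle := (u : IZ).2.mono (hf x) (hf y) hxy.le
    rcases lt_or_eq_of_le hle with h | h
    · exact h
    · exfalso
      have := (u : IZ).2.inj (hf x) (by rw [hf y, h])
      omega
  have hstep : ∀ n : ℤ, f (n + 1) = f n + 1 := by
    intro n
    have h1 : f n + 1 ≤ f (n + 1) := hsm (by omega)
    obtain ⟨m, hm⟩ := hsurj (f n + 1)
    have hmn : n < m := by
      by_contra h
      push_neg at h
      rcases lt_or_eq_of_le h with h' | h'
      · have := hsm h'; omega
      · rw [h'] at hm; omega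
    have h2 : f (n + 1) ≤ f m := by
      rcases lt_or_eq_of_le (show n + 1 ≤ m by omega) with h' | h'
      · exact (hsm h').le
      · rw [h']
    omega
  have hgen : ∀ n : ℤ, f n = n + f 0 := by
    intro n
    induction n using Int.induction_on with
    | zero => omega
    | succ k ih =>
      have h2 := hstep (k : ℤ)
      omega
    | pred k ih =>
      have h2 := hstep (-(k : ℤ) - 1)
      have e1 : (-(k : ℤ) - 1 + 1) = -(k : ℤ) := by ring
      rw [e1] at h2
      omega
  exact ⟨f 0, fun n => by rw [hf n, hgen n]⟩

/-- The shift of a unit. -/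
noncomputable def huni (u : Units IZ) : ℤ := (unit_eq_add u).choose

theorem huni_spec (u : Units IZ) (n : ℤ) : (u : IZ).1 n = some (n + huni u) :=
  (unit_eq_add u).choose_spec n

theorem huni_unique {u : Units IZ} {c : ℤ} (h : ∀ n : ℤ, (u : IZ).1 n = some (n + c)) :
    huni u = c := by
  have h1 := huni_spec u 0
  rw [h 0] at h1
  simp only [Option.some_inj] at h1
  omega

/-- The group of units of `𝓘↗∞(ℤ)` is isomorphic to the additive group `ℤ`,
via the map `α ↦ α n - n` (this value being independent of `n`, i.e. `α n = n + h α`). -/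
theorem statement9 :
    ∃ h : Units IZ → ℤ, Function.Bijective h ∧
      (∀ u v : Units IZ, h (u * v) = h u + h v) ∧
      ∀ (u : Units IZ) (n : ℤ), (u : IZ).1 n = some (n + h u) := by
  refine ⟨huni, ⟨?_, ?_⟩, ?_, huni_spec⟩
  · intro u v huv
    apply Units.ext
    apply Subtype.ext
    funext n
    rw [huni_spec u n, huni_spec v n, huv]
  · intro c
    refine ⟨trUnit c, huni_unique fun n => rfl⟩
  · intro u v
    apply huni_unique
    intro n
    rw [Units.val_mul, IZ.mul_def]
    show ((u : IZ).1 n).bind (v : IZ).1 = _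
    rw [huni_spec u n, Option.bind_some, huni_spec v]
    rw [add_assoc]
end

section
/- The monoid 𝓘↗∞(ℤ) is bisimple: any two elements α, β of 𝓘↗∞(ℤ) are Green 𝓓-equivalent, i.e. there exists γ ∈ 𝓘↗∞(ℤ) with α 𝓛 γ and γ 𝓡 β (where α 𝓛 γ means there exist χ, ζ with χ·α = γ and ζ·γ = α, and γ 𝓡 β means there exist χ', ζ' with γ·χ' = β and β·ζ' = γ). -/
namespace IZGreenLem

/-- Monotone injective partial maps reflect order. -/
theorem le_reflect {a : IZ} {x y u v : ℤ} (hx : a.1 x = some u) (hy : a.1 y = some v)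
    (huv : u ≤ v) : x ≤ y := by
  by_contra h
  push_neg at h
  have h1 : v ≤ u := a.2.mono hy hx h.le
  have h2 : u = v := le_antisymm huv h1
  subst h2
  have := a.2.inj hx hy
  omega

/-- Same range gives a left translate. -/
theorem exists_left {a b : IZ}
    (hr : ∀ y : ℤ, (∃ x, a.1 x = some y) ↔ (∃ x, b.1 x = some y)) :
    ∃ χ : IZ, χ * a = b := by
  classical
  set χf : ℤ → Option ℤ := fun x =>
    (b.1 x).bind (fun y => if h : ∃ t, a.1 t = some y then some h.choose else none) with hχf
  have key : ∀ x y, b.1 x = some y → ∃ t, χf x = some t ∧ a.1 t = some y := by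
    intro x y hxy
    have h : ∃ t, a.1 t = some y := (hr y).2 ⟨x, hxy⟩
    refine ⟨h.choose, ?_, h.choose_spec⟩
    simp only [hχf, hxy, Option.bind_some, dif_pos h]
  have key2 : ∀ x t, χf x = some t → ∃ y, b.1 x = some y ∧ a.1 t = some y := by
    intro x t hxt
    cases hbx : b.1 x with
    | none => simp [hχf, hbx] at hxt
    | some y =>
      obtain ⟨t', ht'1, ht'2⟩ := key x y hbx
      rw [hxt] at ht'1
      exact ⟨y, rfl, (Option.some_inj.mp ht'1) ▸ ht'2⟩
  have hmip : IsMIP χf := by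
    refine ⟨?_, ?_, ?_, ?_⟩
    · intro x y t hx hy
      obtain ⟨c, hbc, hac⟩ := key2 x t hx
      obtain ⟨d, hbd, had⟩ := key2 y t hy
      have : c = d := by rw [hac] at had; exact Option.some_inj.mp had
      subst this
      exact b.2.inj hbc hbd
    · intro x y t t' hx hy hxy
      obtain ⟨c, hbc, hac⟩ := key2 x t hx
      obtain ⟨d, hbd, had⟩ := key2 y t' hy
      exact le_reflect hac had (b.2.mono hbc hbd hxy)
    · refine Set.Finite.subset b.2.cofin_dom ?_
      intro x hx
      simp only [Set.mem_setOf_eq] at hx ⊢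
      cases hbx : b.1 x with
      | none => rfl
      | some y =>
        obtain ⟨t, ht, _⟩ := key x y hbx
        rw [hx] at ht
        exact absurd ht (by simp)
    · refine Set.Finite.subset a.2.cofin_dom ?_
      intro t ht
      simp only [Set.mem_setOf_eq] at ht ⊢
      cases hat : a.1 t with
      | none => rfl
      | some y =>
        obtain ⟨x, hbx⟩ := (hr y).1 ⟨t, hat⟩
        obtain ⟨t', ht'1, ht'2⟩ := key x y hbx
        have : t' = t := a.2.inj ht'2 hat
        subst this
        exact absurd ht'1 (ht x)
  refine ⟨⟨χf, hmip⟩, ?_⟩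
  apply Subtype.ext
  funext x
  show (χf x).bind a.1 = b.1 x
  cases hbx : b.1 x with
  | none =>
    have : χf x = none := by simp [hχf, hbx]
    rw [this]; rfl
  | some y =>
    obtain ⟨t, ht1, ht2⟩ := key x y hbx
    rw [ht1, Option.bind_some, ht2]

/-- Same domain gives a right translate. -/
theorem exists_right {a b : IZ}
    (hd : ∀ x : ℤ, a.1 x = none ↔ b.1 x = none) :
    ∃ χ : IZ, a * χ = b := by
  classical
  set χf : ℤ → Option ℤ := fun y =>
    if h : ∃ t, a.1 t = some y then b.1 h.choose else none with hχf
  have key : ∀ x y, a.1 x = some y → χf y = b.1 x := by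
    intro x y hxy
    have h : ∃ t, a.1 t = some y := ⟨x, hxy⟩
    have hx : h.choose = x := a.2.inj h.choose_spec hxy
    simp only [hχf, dif_pos h, hx]
  have key2 : ∀ y c, χf y = some c → ∃ t, a.1 t = some y ∧ b.1 t = some c := by
    intro y c hyc
    simp only [hχf] at hyc
    split at hyc
    · next h => exact ⟨h.choose, h.choose_spec, hyc⟩
    · exact absurd hyc (by simp)
  have hmip : IsMIP χf := by
    refine ⟨?_, ?_, ?_, ?_⟩
    · intro y1 y2 c h1 h2
      obtain ⟨t1, ha1, hb1⟩ := key2 y1 c h1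
      obtain ⟨t2, ha2, hb2⟩ := key2 y2 c h2
      have : t1 = t2 := b.2.inj hb1 hb2
      subst this
      rw [ha1] at ha2
      exact Option.some_inj.mp ha2
    · intro y1 y2 c1 c2 h1 h2 h12
      obtain ⟨t1, ha1, hb1⟩ := key2 y1 c1 h1
      obtain ⟨t2, ha2, hb2⟩ := key2 y2 c2 h2
      exact b.2.mono hb1 hb2 (le_reflect ha1 ha2 h12)
    · refine Set.Finite.subset a.2.cofin_ran ?_
      intro y hy
      simp only [Set.mem_setOf_eq] at hy ⊢
      intro x hax
      have h1 := key x y hax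
      rw [hy] at h1
      have h2 : a.1 x = none := (hd x).2 h1.symm
      rw [hax] at h2
      exact absurd h2 (by simp)
    · refine Set.Finite.subset b.2.cofin_ran ?_
      intro c hc
      simp only [Set.mem_setOf_eq] at hc ⊢
      intro x hbx
      cases hax' : a.1 x with
      | none =>
        have h2 : b.1 x = none := (hd x).1 hax'
        rw [hbx] at h2
        exact absurd h2 (by simp)
      | some y =>
        have h1 := key x y hax'
        rw [hbx] at h1
        exact hc y h1
  refine ⟨⟨χf, hmip⟩, ?_⟩
  apply Subtype.ext
  funext x
  show (a.1 x).bind χf = b.1 x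
  cases hax : a.1 x with
  | none =>
    have : b.1 x = none := (hd x).1 hax
    rw [this]; rfl
  | some y =>
    rw [Option.bind_some]
    exact key x y hax

end IZGreenLem
namespace IZGreenAux

/-- Count of elements of `S` that are `≤ n`. -/
noncomputable def cnt (S : Finset ℤ) (n : ℤ) : ℤ := ((S.filter (· ≤ n)).card : ℤ)

noncomputable def fS (S : Finset ℤ) (n : ℤ) : ℤ := n - cnt S n

theorem cnt_split (S : Finset ℤ) {a b : ℤ} (hab : a ≤ b) :
    cnt S b = cnt S a + ((S.filter (fun t => a < t ∧ t ≤ b)).card : ℤ) := by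
  classical
  unfold cnt
  rw [← Nat.cast_add, Nat.cast_inj, ← Finset.card_union_of_disjoint]
  · congr 1
    ext t
    simp only [Finset.mem_union, Finset.mem_filter]
    constructor
    · rintro ⟨ht, hb⟩
      by_cases h : t ≤ a
      · exact Or.inl ⟨ht, h⟩
      · exact Or.inr ⟨ht, by omega, hb⟩
    · rintro (⟨ht, h⟩ | ⟨ht, h1, h2⟩)
      · exact ⟨ht, by omega⟩
      · exact ⟨ht, h2⟩
  · rw [Finset.disjoint_left]
    intro t ht ht'
    simp only [Finset.mem_filter] at ht ht'
    omega

theorem fS_lt (S : Finset ℤ) {a b : ℤ} (hab : a < b) (hb : b ∉ S) : fS S a < fS S b := by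
  classical
  have h := cnt_split S hab.le
  have hsub : S.filter (fun t => a < t ∧ t ≤ b) ⊆ Finset.Ioo a b := by
    intro t ht
    simp only [Finset.mem_filter] at ht
    simp only [Finset.mem_Ioo]
    have : t ≠ b := fun he => hb (he ▸ ht.1)
    omega
  have hc : ((S.filter (fun t => a < t ∧ t ≤ b)).card : ℤ) ≤ b - a - 1 := by
    calc ((S.filter (fun t => a < t ∧ t ≤ b)).card : ℤ)
        ≤ ((Finset.Ioo a b).card : ℤ) := by exact_mod_cast Finset.card_le_card hsub
      _ = b - a - 1 := by rw [Int.card_Ioo]; omega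
  unfold fS at *
  omega

theorem fS_inj (S : Finset ℤ) {a b : ℤ} (ha : a ∉ S) (hb : b ∉ S)
    (h : fS S a = fS S b) : a = b := by
  rcases lt_trichotomy a b with h1 | h1 | h1
  · exact absurd h (fS_lt S h1 hb).ne
  · exact h1
  · exact absurd h.symm (fS_lt S h1 ha).ne

theorem fS_surj (S : Finset ℤ) (m : ℤ) : ∃ a, a ∉ S ∧ fS S a = m := by
  classical
  obtain ⟨a0, ha0S, ha0m, ha0⟩ : ∃ a0, a0 ∉ S ∧ a0 ≤ m ∧ fS S a0 = a0 := by
    set a0 := (insert m S).min' ⟨m, Finset.mem_insert_self m S⟩ - 1 with ha0def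
    have hmin : ∀ t ∈ insert m S, a0 < t := by
      intro t ht
      have := Finset.min'_le _ t ht
      omega
    have hS : ∀ t ∈ S, a0 < t := fun t ht => hmin t (Finset.mem_insert_of_mem ht)
    have h1 : a0 ∉ S := fun h => absurd (hS a0 h) (lt_irrefl _)
    have h2 : a0 ≤ m := by have := hmin m (Finset.mem_insert_self m S); omega
    have h3 : S.filter (· ≤ a0) = ∅ := by
      rw [Finset.filter_eq_empty_iff]; intro t ht; have := hS t ht; omega
    refine ⟨a0, h1, h2, ?_⟩
    unfold fS cnt
    rw [h3]
    simp
  have step : ∀ a, a ∉ S → ∃ a', a' ∉ S ∧ fS S a' = fS S a + 1 := by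
    intro a haS
    have hbdd : ∃ b : ℤ, ∀ z : ℤ, (a < z ∧ z ∉ S) → b ≤ z := ⟨a, fun z hz => hz.1.le⟩
    have hinh : ∃ z : ℤ, a < z ∧ z ∉ S := by
      have hinf : ((Set.Ioi a) \ ↑S).Infinite := (Set.Ioi_infinite a).diff S.finite_toSet
      obtain ⟨z, hz⟩ := hinf.nonempty
      exact ⟨z, hz.1, hz.2⟩
    obtain ⟨a', ⟨ha'1, ha'2⟩, hleast⟩ := Int.exists_least_of_bdd hbdd hinh
    refine ⟨a', ha'2, ?_⟩
    have hfilter : S.filter (fun t => a < t ∧ t ≤ a') = Finset.Ioo a a' := by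
      ext t
      simp only [Finset.mem_filter, Finset.mem_Ioo]
      constructor
      · rintro ⟨htS, h1, h2⟩
        have : t ≠ a' := fun he => ha'2 (he ▸ htS)
        omega
      · rintro ⟨h1, h2⟩
        refine ⟨?_, h1, h2.le⟩
        by_contra htS
        have := hleast t ⟨h1, htS⟩
        omega
    have h := cnt_split S ha'1.le
    rw [hfilter] at h
    have hcard : ((Finset.Ioo a a').card : ℤ) = a' - a - 1 := by
      rw [Int.card_Ioo]; omega
    unfold fS at *
    omega
  have key : ∀ k : ℕ, ∃ a, a ∉ S ∧ fS S a = a0 + k := by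
    intro k
    induction k with
    | zero => exact ⟨a0, ha0S, by simp [ha0]⟩
    | succ n ih =>
      obtain ⟨a, haS, hfa⟩ := ih
      obtain ⟨a', ha'S, hfa'⟩ := step a haS
      refine ⟨a', ha'S, ?_⟩
      rw [hfa', hfa]
      push_cast
      ring
  obtain ⟨a, haS, hfa⟩ := key (m - a0).toNat
  exact ⟨a, haS, by rw [hfa]; omega⟩

noncomputable def ginv (S : Finset ℤ) (m : ℤ) : ℤ := (fS_surj S m).choose

theorem ginv_not_mem (S : Finset ℤ) (m : ℤ) : ginv S m ∉ S := (fS_surj S m).choose_spec.1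

theorem fS_ginv (S : Finset ℤ) (m : ℤ) : fS S (ginv S m) = m := (fS_surj S m).choose_spec.2

theorem ginv_mono (S : Finset ℤ) {m1 m2 : ℤ} (h : m1 ≤ m2) : ginv S m1 ≤ ginv S m2 := by
  by_contra hc
  push_neg at hc
  have := fS_lt S hc (ginv_not_mem S m1)
  rw [fS_ginv, fS_ginv] at this
  omega

end IZGreenAux

/-- The monoid `𝓘↗∞(ℤ)` is bisimple: any two elements `α, β` are Green
`𝓓`-equivalent, i.e. there is `γ` with `α 𝓛 γ` and `γ 𝓡 β`. -/
theorem statement10 (α β : IZ) :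
    ∃ γ : IZ, (∃ χ ζ : IZ, χ * α = γ ∧ ζ * γ = α) ∧
      (∃ χ' ζ' : IZ, γ * χ' = β ∧ β * ζ' = γ) := by
  classical
  open IZGreenAux IZGreenLem in
  set Sa := α.2.cofin_ran.toFinset with hSa
  set Sb := β.2.cofin_dom.toFinset with hSb
  have hSa_mem : ∀ y : ℤ, y ∈ Sa ↔ ∀ x : ℤ, α.1 x ≠ some y := by
    intro y
    rw [hSa, Set.Finite.mem_toFinset]
    rfl
  have hSb_mem : ∀ x : ℤ, x ∈ Sb ↔ β.1 x = none := by
    intro x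
    rw [hSb, Set.Finite.mem_toFinset]
    rfl
  set γf : ℤ → Option ℤ := fun x =>
    if x ∈ Sb then none else some (IZGreenAux.ginv Sa (IZGreenAux.fS Sb x)) with hγf
  have hkey : ∀ x, x ∉ Sb → γf x = some (IZGreenAux.ginv Sa (IZGreenAux.fS Sb x)) := by
    intro x hx
    simp only [hγf, if_neg hx]
  have hkey2 : ∀ x t, γf x = some t →
      x ∉ Sb ∧ t = IZGreenAux.ginv Sa (IZGreenAux.fS Sb x) := by
    intro x t hxt
    simp only [hγf] at hxt
    split at hxt
    · exact absurd hxt (by simp)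
    · next hx => exact ⟨hx, (Option.some_inj.mp hxt).symm⟩
  have hγnone : ∀ x, γf x = none ↔ x ∈ Sb := by
    intro x
    by_cases hx : x ∈ Sb
    · simp [hγf, hx]
    · simp [hγf, hx]
  have hγran : ∀ y : ℤ, (∃ x, γf x = some y) ↔ y ∉ Sa := by
    intro y
    constructor
    · rintro ⟨x, hx⟩
      obtain ⟨_, ht⟩ := hkey2 x y hx
      rw [ht]
      exact IZGreenAux.ginv_not_mem Sa _
    · intro hy
      refine ⟨IZGreenAux.ginv Sb (IZGreenAux.fS Sa y), ?_⟩
      rw [hkey _ (IZGreenAux.ginv_not_mem Sb _), IZGreenAux.fS_ginv]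
      congr 1
      refine IZGreenAux.fS_inj Sa (IZGreenAux.ginv_not_mem Sa _) hy ?_
      rw [IZGreenAux.fS_ginv]
  have hmip : IsMIP γf := by
    refine ⟨?_, ?_, ?_, ?_⟩
    · intro x y t hx hy
      obtain ⟨hx1, hx2⟩ := hkey2 x t hx
      obtain ⟨hy1, hy2⟩ := hkey2 y t hy
      refine IZGreenAux.fS_inj Sb hx1 hy1 ?_
      have heq := hx2.symm.trans hy2
      have h3 : IZGreenAux.fS Sa (IZGreenAux.ginv Sa (IZGreenAux.fS Sb x)) =
          IZGreenAux.fS Sa (IZGreenAux.ginv Sa (IZGreenAux.fS Sb y)) := by rw [heq]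
      rw [IZGreenAux.fS_ginv, IZGreenAux.fS_ginv] at h3
      exact h3
    · intro x y t1 t2 hx hy hxy
      obtain ⟨hx1, hx2⟩ := hkey2 x t1 hx
      obtain ⟨hy1, hy2⟩ := hkey2 y t2 hy
      rw [hx2, hy2]
      refine IZGreenAux.ginv_mono Sa ?_
      rcases eq_or_lt_of_le hxy with h | h
      · subst h; exact le_refl _
      · exact (IZGreenAux.fS_lt Sb h hy1).le
    · have : {x : ℤ | γf x = none} = ↑Sb := by
        ext x
        simp only [Set.mem_setOf_eq, Finset.coe_sort_coe, Finset.mem_coe]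
        exact hγnone x
      rw [this]
      exact Sb.finite_toSet
    · have : {y : ℤ | ∀ x : ℤ, γf x ≠ some y} = ↑Sa := by
        ext y
        simp only [Set.mem_setOf_eq, Finset.mem_coe]
        constructor
        · intro h
          by_contra hy
          obtain ⟨x, hx⟩ := (hγran y).2 hy
          exact h x hx
        · intro hy x hx
          exact absurd ((hγran y).1 ⟨x, hx⟩) (by simpa using hy)
      rw [this]
      exact Sa.finite_toSet
  set γ : IZ := ⟨γf, hmip⟩ with hγdef
  have hr : ∀ y : ℤ, (∃ x, α.1 x = some y) ↔ (∃ x, γ.1 x = some y) := by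
    intro y
    rw [show γ.1 = γf from rfl, hγran y, hSa_mem y]
    push_neg
    rfl
  have hd : ∀ x : ℤ, γ.1 x = none ↔ β.1 x = none := by
    intro x
    rw [show γ.1 = γf from rfl, hγnone x, hSb_mem x]
  obtain ⟨χ, hχ⟩ := IZGreenLem.exists_left hr
  obtain ⟨ζ, hζ⟩ := IZGreenLem.exists_left (a := γ) (b := α) (fun y => (hr y).symm)
  obtain ⟨χ', hχ'⟩ := IZGreenLem.exists_right hd
  obtain ⟨ζ', hζ'⟩ := IZGreenLem.exists_right (a := β) (b := γ) (fun x => (hd x).symm)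
  exact ⟨γ, ⟨χ, ζ, hχ, hζ⟩, ⟨χ', ζ', hχ', hζ'⟩⟩
end

section
/- For every idempotent ε of 𝓘↗∞(ℤ), the 𝓗-class of ε, namely H_ε = {α ∈ 𝓘↗∞(ℤ) : dom α = dom ε and ran α = dom ε}, is a group under composition with identity element ε, and this group is isomorphic to the additive group ℤ of integers. -/
section Aux

/-- Order isomorphism between a cofinite subset of `ℤ` and `ℤ`. -/
noncomputable def cofinIso (S : Set ℤ) (hS : Sᶜ.Finite) : ↥S ≃o ℤ :=
  haveI hne : Nonempty ↥S := (Set.infinite_of_finite_compl hS).nonempty.to_subtype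
  haveI : NoMaxOrder ↥S := by
    constructor
    intro a
    obtain ⟨y, hy⟩ := ((Set.Ioi_infinite (a : ℤ)).diff hS).nonempty
    exact ⟨⟨y, by simpa using hy.2⟩, hy.1⟩
  haveI : NoMinOrder ↥S := by
    constructor
    intro a
    obtain ⟨y, hy⟩ := ((Set.Iio_infinite (a : ℤ)).diff hS).nonempty
    exact ⟨⟨y, by simpa using hy.2⟩, hy.1⟩
  letI : DecidablePred (· ∈ S) := Classical.decPred _
  letI lfo : LocallyFiniteOrder ↥S := Subtype.instLocallyFiniteOrder _
  @orderIsoIntOfLinearSuccPredArch ↥S _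
    (@LinearLocallyFiniteOrder.succOrder ↥S _ lfo)
    (@LinearLocallyFiniteOrder.predOrder ↥S _ lfo)
    (by letI := LinearLocallyFiniteOrder.succOrder ↥S; exact inferInstance) _ _ _

/-- Every order isomorphism of `ℤ` is a translation. -/
theorem orderIso_int_translation (f : ℤ ≃o ℤ) (x : ℤ) : f x = x + f 0 := by
  have step : ∀ n : ℤ, f (n + 1) = f n + 1 := by
    intro n
    have h1 : f n + 1 ≤ f (n + 1) := by
      have := f.strictMono (lt_add_one n)
      omega
    have h2 : f (n + 1) ≤ f n + 1 := by
      have hy : n < f.symm (f n + 1) := by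
        have := f.symm.strictMono (lt_add_one (f n))
        simpa using this
      have h3 : n + 1 ≤ f.symm (f n + 1) := by omega
      have := f.monotone h3
      simpa using this
    omega
  induction x using Int.induction_on with
  | zero => simp
  | succ n ih => push_cast [step n, ih]; ring
  | pred n ih =>
      have h := step (-(n:ℤ) - 1)
      rw [show -(n:ℤ) - 1 + 1 = -(n:ℤ) by ring] at h
      omega

end Aux

section Aux2
open IZ

theorem dom_compl (β : IZ) : (IZ.dom β)ᶜ = {x : ℤ | β.1 x = none} := by
  ext x; simp [IZ.dom]

theorem dom_compl_finite (β : IZ) : (IZ.dom β)ᶜ.Finite := by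
  rw [dom_compl]; exact β.2.cofin_dom

theorem eps_id (ε : IZ) (hε : ε * ε = ε) : ∀ x ∈ IZ.dom ε, ε.1 x = some x := by
  intro x hx
  obtain ⟨y, hy⟩ := Option.ne_none_iff_exists'.mp hx
  have h2 : (ε * ε).1 x = some y := by rw [hε]; exact hy
  rw [IZ.mul_def, IZ.pcomp, hy, Option.bind_some] at h2
  have h3 : y = x := ε.2.inj h2 hy
  rw [h3] at hy
  exact hy

theorem eps_none (ε : IZ) (x : ℤ) (hx : x ∉ IZ.dom ε) : ε.1 x = none := by
  by_contra h; exact hx h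

theorem restr_aux (ε α : IZ) (hd : IZ.dom α = IZ.dom ε) (hr : IZ.ran α = IZ.dom ε)
    (x : ℤ) (hx : x ∈ IZ.dom ε) : ∃ y, α.1 x = some y ∧ y ∈ IZ.dom ε := by
  have hx' : x ∈ IZ.dom α := by rw [hd]; exact hx
  obtain ⟨y, hy⟩ := Option.ne_none_iff_exists'.mp hx'
  exact ⟨y, hy, by rw [← hr]; exact ⟨x, hy⟩⟩

/-- The restriction of `α` to a self-map of `dom ε`. -/
noncomputable def restr (ε α : IZ) (hd : IZ.dom α = IZ.dom ε) (hr : IZ.ran α = IZ.dom ε)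
    (x : ↥(IZ.dom ε)) : ↥(IZ.dom ε) :=
  ⟨Classical.choose (restr_aux ε α hd hr x.1 x.2),
   (Classical.choose_spec (restr_aux ε α hd hr x.1 x.2)).2⟩

theorem restr_spec (ε α : IZ) (hd : IZ.dom α = IZ.dom ε) (hr : IZ.ran α = IZ.dom ε)
    (x : ↥(IZ.dom ε)) : α.1 x.1 = some (restr ε α hd hr x).1 :=
  (Classical.choose_spec (restr_aux ε α hd hr x.1 x.2)).1

theorem restr_strictMono (ε α : IZ) (hd : IZ.dom α = IZ.dom ε) (hr : IZ.ran α = IZ.dom ε) :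
    StrictMono (restr ε α hd hr) := by
  apply Monotone.strictMono_of_injective
  · intro x y hxy
    exact Subtype.coe_le_coe.mp
      (α.2.mono (restr_spec ε α hd hr x) (restr_spec ε α hd hr y) hxy)
  · intro x y hxy
    have h1 := restr_spec ε α hd hr x
    have h2 := restr_spec ε α hd hr y
    rw [hxy] at h1
    exact Subtype.ext (α.2.inj h1 h2)

theorem restr_surjective (ε α : IZ) (hd : IZ.dom α = IZ.dom ε) (hr : IZ.ran α = IZ.dom ε) :
    Function.Surjective (restr ε α hd hr) := by
  intro y
  have hy : y.1 ∈ IZ.ran α := by rw [hr]; exact y.2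
  obtain ⟨x, hx⟩ := hy
  have hxd : x ∈ IZ.dom ε := by rw [← hd]; intro h; rw [h] at hx; simp at hx
  refine ⟨⟨x, hxd⟩, Subtype.ext ?_⟩
  have h := restr_spec ε α hd hr ⟨x, hxd⟩
  rw [hx] at h
  exact (Option.some_inj.mp h).symm

/-- The element of `H_ε` as an order automorphism of `dom ε`. -/
noncomputable def toIso (ε α : IZ) (hd : IZ.dom α = IZ.dom ε) (hr : IZ.ran α = IZ.dom ε) :
    ↥(IZ.dom ε) ≃o ↥(IZ.dom ε) :=
  StrictMono.orderIsoOfSurjective _ (restr_strictMono ε α hd hr) (restr_surjective ε α hd hr)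

/-- The conjugated automorphism of `ℤ`. -/
noncomputable def conjIso (ε α : IZ) (hd : IZ.dom α = IZ.dom ε) (hr : IZ.ran α = IZ.dom ε) :
    ℤ ≃o ℤ :=
  ((cofinIso _ (dom_compl_finite ε)).symm.trans (toIso ε α hd hr)).trans
    (cofinIso _ (dom_compl_finite ε))

theorem conjIso_apply (ε α : IZ) (hd : IZ.dom α = IZ.dom ε) (hr : IZ.ran α = IZ.dom ε)
    (n : ℤ) :
    conjIso ε α hd hr n =
      (cofinIso _ (dom_compl_finite ε))
        (restr ε α hd hr ((cofinIso _ (dom_compl_finite ε)).symm n)) := rfl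

/-- The translation number of an element of `H_ε`. -/
noncomputable def transNum (ε α : IZ) (hd : IZ.dom α = IZ.dom ε) (hr : IZ.ran α = IZ.dom ε) :
    ℤ := conjIso ε α hd hr 0

theorem restr_eq (ε α : IZ) (hd : IZ.dom α = IZ.dom ε) (hr : IZ.ran α = IZ.dom ε)
    (x : ↥(IZ.dom ε)) :
    restr ε α hd hr x =
      (cofinIso _ (dom_compl_finite ε)).symm
        ((cofinIso _ (dom_compl_finite ε)) x + transNum ε α hd hr) := by
  have h := orderIso_int_translation (conjIso ε α hd hr) ((cofinIso _ (dom_compl_finite ε)) x)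
  rw [conjIso_apply, OrderIso.symm_apply_apply] at h
  rw [← transNum] at h
  apply_fun (cofinIso _ (dom_compl_finite ε)).symm at h
  rw [OrderIso.symm_apply_apply] at h
  exact h

open scoped Classical in
theorem val_eq (ε α : IZ) (hd : IZ.dom α = IZ.dom ε) (hr : IZ.ran α = IZ.dom ε) (x : ℤ) :
    α.1 x = if h : x ∈ IZ.dom ε then
      some ((cofinIso _ (dom_compl_finite ε)).symm
        ((cofinIso _ (dom_compl_finite ε)) ⟨x, h⟩ + transNum ε α hd hr)).1
      else none := by
  by_cases h : x ∈ IZ.dom ε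
  · rw [dif_pos h]
    have h1 := restr_spec ε α hd hr ⟨x, h⟩
    rw [restr_eq ε α hd hr ⟨x, h⟩] at h1
    exact h1
  · rw [dif_neg h]
    by_contra h2
    exact h (by rw [← hd]; exact h2)

theorem transNum_comp (ε α β : IZ)
    (hdα : IZ.dom α = IZ.dom ε) (hrα : IZ.ran α = IZ.dom ε)
    (hdβ : IZ.dom β = IZ.dom ε) (hrβ : IZ.ran β = IZ.dom ε)
    (hdm : IZ.dom (α * β) = IZ.dom ε) (hrm : IZ.ran (α * β) = IZ.dom ε) :
    transNum ε (α * β) hdm hrm = transNum ε α hdα hrα + transNum ε β hdβ hrβ := by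
  have hcomp : ∀ x : ↥(IZ.dom ε),
      restr ε (α * β) hdm hrm x = restr ε β hdβ hrβ (restr ε α hdα hrα x) := by
    intro x
    apply Subtype.ext
    apply Option.some_inj.mp
    rw [← restr_spec ε β hdβ hrβ (restr ε α hdα hrα x)]
    have h1 := restr_spec ε (α * β) hdm hrm x
    rw [IZ.mul_def, IZ.pcomp, restr_spec ε α hdα hrα x, Option.bind_some] at h1
    exact h1.symm
  have h2 := restr_eq ε (α * β) hdm hrm ((cofinIso _ (dom_compl_finite ε)).symm 0)
  rw [hcomp, restr_eq ε α hdα hrα _, restr_eq ε β hdβ hrβ _] at h2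
  simp only [OrderIso.apply_symm_apply] at h2
  have h3 := (cofinIso _ (dom_compl_finite ε)).symm.injective h2
  omega

open scoped Classical in
/-- The shift-by-`k` element supported on `dom ε`. -/
noncomputable def shiftFun (ε : IZ) (k : ℤ) : ℤ → Option ℤ :=
  fun x => if h : x ∈ IZ.dom ε then
    some ((cofinIso _ (dom_compl_finite ε)).symm
      ((cofinIso _ (dom_compl_finite ε)) ⟨x, h⟩ + k)).1
    else none

open scoped Classical in
theorem shiftFun_apply (ε : IZ) (k : ℤ) (x : ↥(IZ.dom ε)) :
    shiftFun ε k x.1 = some ((cofinIso _ (dom_compl_finite ε)).symm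
      ((cofinIso _ (dom_compl_finite ε)) x + k)).1 := by
  simp only [shiftFun]
  rw [dif_pos x.2]

theorem shiftFun_none (ε : IZ) (k : ℤ) (x : ℤ) (hx : x ∉ IZ.dom ε) :
    shiftFun ε k x = none := by
  simp only [shiftFun]
  rw [dif_neg hx]

theorem shiftFun_isMIP (ε : IZ) (k : ℤ) : IsMIP (shiftFun ε k) := by
  constructor
  · intro x y a hx hy
    by_cases h1 : x ∈ IZ.dom ε
    · by_cases h2 : y ∈ IZ.dom ε
      · rw [shiftFun_apply ε k ⟨x, h1⟩] at hx
        rw [shiftFun_apply ε k ⟨y, h2⟩] at hy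
        have h3 : ((cofinIso _ (dom_compl_finite ε)).symm
            ((cofinIso _ (dom_compl_finite ε)) ⟨x, h1⟩ + k)).1 =
            ((cofinIso _ (dom_compl_finite ε)).symm
            ((cofinIso _ (dom_compl_finite ε)) ⟨y, h2⟩ + k)).1 := by
          rw [Option.some_inj.mp hx, Option.some_inj.mp hy]
        have h4 := (cofinIso _ (dom_compl_finite ε)).symm.injective (Subtype.ext h3)
        have h5 : (cofinIso _ (dom_compl_finite ε)) ⟨x, h1⟩ =
            (cofinIso _ (dom_compl_finite ε)) ⟨y, h2⟩ := by omega
        have := (cofinIso _ (dom_compl_finite ε)).injective h5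
        exact Subtype.mk_eq_mk.mp this
      · rw [shiftFun_none ε k y h2] at hy; simp at hy
    · rw [shiftFun_none ε k x h1] at hx; simp at hx
  · intro x y a b hx hy hxy
    by_cases h1 : x ∈ IZ.dom ε
    · by_cases h2 : y ∈ IZ.dom ε
      · rw [shiftFun_apply ε k ⟨x, h1⟩] at hx
        rw [shiftFun_apply ε k ⟨y, h2⟩] at hy
        rw [← Option.some_inj.mp hx, ← Option.some_inj.mp hy]
        have h3 : (⟨x, h1⟩ : ↥(IZ.dom ε)) ≤ ⟨y, h2⟩ := hxy
        have h4 : (cofinIso _ (dom_compl_finite ε)) ⟨x, h1⟩ + k ≤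
            (cofinIso _ (dom_compl_finite ε)) ⟨y, h2⟩ + k := by
          have := (cofinIso _ (dom_compl_finite ε)).monotone h3; omega
        exact (cofinIso _ (dom_compl_finite ε)).symm.monotone h4
      · rw [shiftFun_none ε k y h2] at hy; simp at hy
    · rw [shiftFun_none ε k x h1] at hx; simp at hx
  · have : {x : ℤ | shiftFun ε k x = none} ⊆ (IZ.dom ε)ᶜ := by
      intro x hx hmem
      rw [Set.mem_setOf_eq, shiftFun_apply ε k ⟨x, hmem⟩] at hx
      simp at hx
    exact (dom_compl_finite ε).subset this
  · have : {y : ℤ | ∀ x : ℤ, shiftFun ε k x ≠ some y} ⊆ (IZ.dom ε)ᶜ := by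
      intro y hy hmem
      apply hy ((cofinIso _ (dom_compl_finite ε)).symm
        ((cofinIso _ (dom_compl_finite ε)) ⟨y, hmem⟩ - k)).1
      rw [shiftFun_apply ε k _]
      simp only [OrderIso.apply_symm_apply]
      rw [show (cofinIso _ (dom_compl_finite ε)) ⟨y, hmem⟩ - k + k =
        (cofinIso _ (dom_compl_finite ε)) ⟨y, hmem⟩ by ring, OrderIso.symm_apply_apply]
    exact (dom_compl_finite ε).subset this

/-- The shift-by-`k` element of `IZ`. -/
noncomputable def shiftEl (ε : IZ) (k : ℤ) : IZ := ⟨shiftFun ε k, shiftFun_isMIP ε k⟩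

theorem shiftEl_dom (ε : IZ) (k : ℤ) : IZ.dom (shiftEl ε k) = IZ.dom ε := by
  ext x
  by_cases h : x ∈ IZ.dom ε
  · simp only [IZ.dom, Set.mem_setOf_eq]
    rw [show (shiftEl ε k).1 x = shiftFun ε k x from rfl, shiftFun_apply ε k ⟨x, h⟩]
    simp only [ne_eq, reduceCtorEq, not_false_eq_true, true_iff]
    exact h
  · simp only [IZ.dom, Set.mem_setOf_eq]
    rw [show (shiftEl ε k).1 x = shiftFun ε k x from rfl, shiftFun_none ε k x h]
    simp only [ne_eq, not_true_eq_false, false_iff]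
    exact h

theorem shiftEl_ran (ε : IZ) (k : ℤ) : IZ.ran (shiftEl ε k) = IZ.dom ε := by
  ext y
  constructor
  · rintro ⟨x, hx⟩
    rw [show (shiftEl ε k).1 x = shiftFun ε k x from rfl] at hx
    by_cases h : x ∈ IZ.dom ε
    · rw [shiftFun_apply ε k ⟨x, h⟩] at hx
      rw [← Option.some_inj.mp hx]
      exact ((cofinIso _ (dom_compl_finite ε)).symm _).2
    · rw [shiftFun_none ε k x h] at hx; simp at hx
  · intro hy
    refine ⟨((cofinIso _ (dom_compl_finite ε)).symm
      ((cofinIso _ (dom_compl_finite ε)) ⟨y, hy⟩ - k)).1, ?_⟩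
    rw [show (shiftEl ε k).1 _ = shiftFun ε k _ from rfl, shiftFun_apply ε k _]
    simp only [OrderIso.apply_symm_apply]
    rw [show (cofinIso _ (dom_compl_finite ε)) ⟨y, hy⟩ - k + k =
      (cofinIso _ (dom_compl_finite ε)) ⟨y, hy⟩ by ring, OrderIso.symm_apply_apply]

theorem shiftEl_transNum (ε : IZ) (k : ℤ) :
    transNum ε (shiftEl ε k) (shiftEl_dom ε k) (shiftEl_ran ε k) = k := by
  have h1 := restr_spec ε (shiftEl ε k) (shiftEl_dom ε k) (shiftEl_ran ε k)
    ((cofinIso _ (dom_compl_finite ε)).symm 0)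
  rw [restr_eq] at h1
  rw [show (shiftEl ε k).1 ((cofinIso _ (dom_compl_finite ε)).symm 0).1 =
    shiftFun ε k ((cofinIso _ (dom_compl_finite ε)).symm 0).1 from rfl,
    shiftFun_apply ε k _] at h1
  have h5 := Option.some_inj.mp h1
  have h6 := (cofinIso _ (dom_compl_finite ε)).symm.injective (Subtype.ext h5)
  simp only [OrderIso.apply_symm_apply] at h6
  omega

end Aux2

/-- For every idempotent `ε` of `𝓘↗∞(ℤ)`, its `𝓗`-class
`H_ε = {α : dom α = dom ε ∧ ran α = dom ε}` is a group under composition with identity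
`ε`, and this group is isomorphic to the additive group `ℤ`. -/
theorem statement11 (ε : IZ) (hε : ε * ε = ε) :
    let H : Set IZ := {α : IZ | IZ.dom α = IZ.dom ε ∧ IZ.ran α = IZ.dom ε}
    ε ∈ H ∧
    (∀ α ∈ H, ∀ β ∈ H, α * β ∈ H) ∧
    (∀ α ∈ H, ε * α = α ∧ α * ε = α) ∧
    (∀ α ∈ H, ∃ β ∈ H, α * β = ε ∧ β * α = ε) ∧
    ∃ g : H → ℤ, Function.Bijective g ∧
      ∀ (a b : H) (hab : a.1 * b.1 ∈ H), g ⟨a.1 * b.1, hab⟩ = g a + g b := by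
  intro H
  have hran_eps : IZ.ran ε = IZ.dom ε := by
    ext y; constructor
    · rintro ⟨x, hx⟩
      have hxd : x ∈ IZ.dom ε := fun h => by simp [h] at hx
      have h1 := eps_id ε hε x hxd
      rw [h1] at hx
      rw [← Option.some_inj.mp hx]
      exact hxd
    · intro hy; exact ⟨y, eps_id ε hε y hy⟩
  have hεH : ε ∈ H := ⟨rfl, hran_eps⟩
  have hclose : ∀ α ∈ H, ∀ β ∈ H, α * β ∈ H := by
    intro α hα β hβ
    obtain ⟨hdα, hrα⟩ := hα; obtain ⟨hdβ, hrβ⟩ := hβ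
    constructor
    · ext x; constructor
      · intro hx
        rw [← hdα]
        intro h
        apply hx
        show (α.1 x).bind β.1 = none
        rw [h]; rfl
      · intro hx
        obtain ⟨y, hy, hyD⟩ := restr_aux ε α hdα hrα x hx
        have hyb : y ∈ IZ.dom β := by rw [hdβ]; exact hyD
        obtain ⟨z, hz⟩ := Option.ne_none_iff_exists'.mp hyb
        show (α.1 x).bind β.1 ≠ none
        rw [hy, Option.bind_some, hz]
        simp
    · ext z; constructor
      · rintro ⟨x, hx⟩
        rw [IZ.mul_def, IZ.pcomp] at hx
        obtain ⟨y, hy, hyz⟩ := Option.bind_eq_some_iff.mp hx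
        rw [← hrβ]; exact ⟨y, hyz⟩
      · intro hz
        rw [← hrβ] at hz
        obtain ⟨y, hy⟩ := hz
        have hyd : y ∈ IZ.dom β := fun h => by simp [h] at hy
        have hyD : y ∈ IZ.dom ε := by rw [← hdβ]; exact hyd
        have hyr : y ∈ IZ.ran α := by rw [hrα]; exact hyD
        obtain ⟨x, hx⟩ := hyr
        exact ⟨x, by rw [IZ.mul_def, IZ.pcomp, hx, Option.bind_some]; exact hy⟩
  have hid : ∀ α ∈ H, ε * α = α ∧ α * ε = α := by
    intro α hα
    obtain ⟨hdα, hrα⟩ := hα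
    constructor
    · apply Subtype.ext; funext x
      show (ε.1 x).bind α.1 = α.1 x
      by_cases h : x ∈ IZ.dom ε
      · rw [eps_id ε hε x h, Option.bind_some]
      · rw [eps_none ε x h]
        have hxa : x ∉ IZ.dom α := by rw [hdα]; exact h
        have hxn : α.1 x = none := by by_contra hc; exact hxa hc
        rw [hxn]; rfl
    · apply Subtype.ext; funext x
      show (α.1 x).bind ε.1 = α.1 x
      cases hax : α.1 x with
      | none => rfl
      | some y =>
        have hyD : y ∈ IZ.dom ε := by rw [← hrα]; exact ⟨x, hax⟩
        rw [Option.bind_some, eps_id ε hε y hyD]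
  have hinj : ∀ (α β : IZ) (hdα : IZ.dom α = IZ.dom ε) (hrα : IZ.ran α = IZ.dom ε)
      (hdβ : IZ.dom β = IZ.dom ε) (hrβ : IZ.ran β = IZ.dom ε),
      transNum ε α hdα hrα = transNum ε β hdβ hrβ → α = β := by
    intro α β hdα hrα hdβ hrβ h
    apply Subtype.ext; funext x
    rw [val_eq ε α hdα hrα x, val_eq ε β hdβ hrβ x, h]
  have heps0 : transNum ε ε rfl hran_eps = 0 := by
    have h1 := restr_spec ε ε rfl hran_eps ((cofinIso _ (dom_compl_finite ε)).symm 0)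
    rw [eps_id ε hε _ ((cofinIso _ (dom_compl_finite ε)).symm 0).2] at h1
    have h2 : restr ε ε rfl hran_eps ((cofinIso _ (dom_compl_finite ε)).symm 0) =
        (cofinIso _ (dom_compl_finite ε)).symm 0 :=
      (Subtype.ext (Option.some_inj.mp h1)).symm
    show conjIso ε ε rfl hran_eps 0 = 0
    rw [conjIso_apply, h2, OrderIso.apply_symm_apply]
  have hinv : ∀ α ∈ H, ∃ β ∈ H, α * β = ε ∧ β * α = ε := by
    intro α hα
    obtain ⟨hdα, hrα⟩ := hα
    have hβH : shiftEl ε (-(transNum ε α hdα hrα)) ∈ H :=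
      ⟨shiftEl_dom _ _, shiftEl_ran _ _⟩
    refine ⟨shiftEl ε (-(transNum ε α hdα hrα)), hβH, ?_, ?_⟩
    · have hm := hclose α ⟨hdα, hrα⟩ _ hβH
      obtain ⟨hdm, hrm⟩ := hm
      apply hinj _ _ hdm hrm rfl hran_eps
      rw [transNum_comp ε α _ hdα hrα (shiftEl_dom _ _) (shiftEl_ran _ _) hdm hrm,
        shiftEl_transNum, heps0]
      ring
    · have hm := hclose _ hβH α ⟨hdα, hrα⟩
      obtain ⟨hdm, hrm⟩ := hm
      apply hinj _ _ hdm hrm rfl hran_eps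
      rw [transNum_comp ε _ α (shiftEl_dom _ _) (shiftEl_ran _ _) hdα hrα hdm hrm,
        shiftEl_transNum, heps0]
      ring
  refine ⟨hεH, hclose, hid, hinv, fun a => transNum ε a.1 a.2.1 a.2.2, ⟨?_, ?_⟩, ?_⟩
  · intro a b hab
    exact Subtype.ext (hinj a.1 b.1 a.2.1 a.2.2 b.2.1 b.2.2 hab)
  · intro k
    exact ⟨⟨shiftEl ε k, shiftEl_dom ε k, shiftEl_ran ε k⟩, shiftEl_transNum ε k⟩
  · intro a b hab
    exact transNum_comp ε a.1 b.1 a.2.1 a.2.2 b.2.1 b.2.2 hab.1 hab.2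
end

section
/- For all elements α, β of 𝓘↗∞(ℤ), both the set {χ ∈ 𝓘↗∞(ℤ) : α·χ = β} and the set {χ ∈ 𝓘↗∞(ℤ) : χ·α = β} are finite. -/
open IZ in
/-- If every member of a set `S` of elements of `IZ` is determined (with a `some` value)
outside a fixed finite set `T`, then `S` is finite. -/
theorem aux_finite (S : Set IZ) (T : Set ℤ) (hT : T.Finite) (h : ℤ → ℤ)
    (hdet : ∀ χ ∈ S, ∀ x ∉ T, χ.1 x = some (h x)) : S.Finite := by
  classical
  -- enlarge T to a nonempty finite set to get bounds
  have hT' : (insert (0:ℤ) T).Finite := hT.insert 0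
  set F : Finset ℤ := hT'.toFinset with hF
  have hFne : F.Nonempty := ⟨0, by simp [hF]⟩
  set a : ℤ := F.min' hFne - 1 with ha
  set b : ℤ := F.max' hFne + 1 with hb
  have haT : a ∉ T := by
    intro haT
    have : a ∈ F := by simp [hF, haT]
    have := F.min'_le a this
    omega
  have hbT : b ∉ T := by
    intro hbT
    have : b ∈ F := by simp [hF, hbT]
    have := F.le_max' b this
    omega
  have hax : ∀ x ∈ T, a ≤ x ∧ x ≤ b := by
    intro x hx
    have hxF : x ∈ F := by simp [hF, hx]
    have h1 := F.min'_le x hxF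
    have h2 := F.le_max' x hxF
    omega
  -- the bounding set of possible values
  set V : Set (Option ℤ) := insert none (some '' Set.Icc (h a) (h b)) with hV
  have hVfin : V.Finite := (Set.finite_Icc (h a) (h b)).image _ |>.insert none
  set FT : Finset ℤ := hT.toFinset with hFT
  -- the restriction map
  set Φ : IZ → (FT → Option ℤ) := fun χ => fun x => χ.1 x with hΦ
  have himg : Φ '' S ⊆ Set.pi Set.univ (fun _ : FT => V) := by
    rintro f ⟨χ, hχ, rfl⟩
    intro x _
    show χ.1 x ∈ V
    cases hcx : χ.1 (x : ℤ) with
    | none => exact Or.inl rfl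
    | some y =>
      have hxT : (x : ℤ) ∈ T := by
        exact hT.mem_toFinset.mp x.2
      obtain ⟨h1, h2⟩ := hax x hxT
      have hca : χ.1 a = some (h a) := hdet χ hχ a haT
      have hcb : χ.1 b = some (h b) := hdet χ hχ b hbT
      have hl : h a ≤ y := χ.2.mono hca hcx h1
      have hr : y ≤ h b := χ.2.mono hcx hcb h2
      exact Or.inr ⟨y, ⟨hl, hr⟩, rfl⟩
  have hpifin : (Set.pi Set.univ (fun _ : FT => V)).Finite :=
    Set.Finite.pi (fun _ => hVfin)
  have hinjOn : Set.InjOn Φ S := by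
    intro χ hχ χ' hχ' heq
    apply Subtype.ext
    funext x
    by_cases hx : x ∈ T
    · have hxF : x ∈ FT := by simp [hFT, hx]
      exact congrFun heq ⟨x, hxF⟩
    · rw [hdet χ hχ x hx, hdet χ' hχ' x hx]
  exact Set.Finite.of_finite_image (hpifin.subset himg) hinjOn

/-- For all `α, β` in `𝓘↗∞(ℤ)`, both `{χ : α * χ = β}` and
`{χ : χ * α = β}` are finite. -/
theorem statement12 (α β : IZ) :
    {χ : IZ | α * χ = β}.Finite ∧ {χ : IZ | χ * α = β}.Finite := by
  classical
  constructor
  · -- left: χ is determined on the range of α where β is defined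
    set T : Set ℤ := {x | ∀ z, α.1 z ≠ some x} ∪
      ((fun z => (α.1 z).getD 0) '' {z | β.1 z = none}) with hT
    have hTfin : T.Finite := α.2.cofin_ran.union (β.2.cofin_dom.image _)
    set h : ℤ → ℤ := fun x =>
      if hx : ∃ z, α.1 z = some x then (β.1 hx.choose).getD 0 else 0 with hh
    apply aux_finite _ T hTfin h
    intro χ hχ x hx
    simp only [hT, Set.mem_union, Set.mem_setOf_eq, not_or] at hx
    obtain ⟨h1, h2⟩ := hx
    push_neg at h1
    obtain ⟨z, hz⟩ := h1
    have heq : χ.1 x = β.1 z := by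
      have := congrFun (congrArg Subtype.val hχ) z
      rw [IZ.mul_def] at this
      simpa [IZ.pcomp, hz] using this
    have hβz : β.1 z ≠ none := by
      intro hn
      exact h2 ⟨z, hn, by simp [hz]⟩
    obtain ⟨w, hw⟩ := Option.ne_none_iff_exists'.mp hβz
    have hex : ∃ z', α.1 z' = some x := ⟨z, hz⟩
    have hz' : hex.choose = z := α.2.inj hex.choose_spec hz
    rw [heq, hw]
    simp only [hh]
    rw [dif_pos hex, hz', hw]
    simp
  · -- right: χ is determined where β is defined with value in the range of α
    set T : Set ℤ := {x | β.1 x = none} ∪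
      (β.1 ⁻¹' (Option.some '' {b | ∀ a, α.1 a ≠ some b})) with hT
    have hpre : (β.1 ⁻¹' (Option.some '' {b | ∀ a, α.1 a ≠ some b})).Finite := by
      refine Set.Finite.preimage ?_ (α.2.cofin_ran.image _)
      intro x hx y hy hxy
      obtain ⟨p, _, hp⟩ := hx
      obtain ⟨q, _, hq⟩ := hy
      have hfa : β.1 x = some p := hp.symm
      have hfb : β.1 y = some q := hq.symm
      have : some p = some q := by rw [← hfa, ← hfb, hxy]
      rw [Option.some_inj] at this
      subst this
      exact β.2.inj hfa hfb
    have hTfin : T.Finite := β.2.cofin_dom.union hpre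
    set h : ℤ → ℤ := fun x =>
      if hx : ∃ a c, β.1 x = some c ∧ α.1 a = some c then hx.choose else 0 with hh
    apply aux_finite _ T hTfin h
    intro χ hχ x hx
    simp only [hT, Set.mem_union, Set.mem_setOf_eq, Set.mem_preimage] at hx
    push_neg at hx
    obtain ⟨h1, h2⟩ := hx
    obtain ⟨c, hc⟩ := Option.ne_none_iff_exists'.mp h1
    have hcr : ∃ a, α.1 a = some c := by
      by_contra hcon
      push_neg at hcon
      exact h2 ⟨c, hcon, hc.symm⟩
    obtain ⟨a, hac⟩ := hcr
    have heq : (χ.1 x).bind α.1 = some c := by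
      have := congrFun (congrArg Subtype.val hχ) x
      rw [IZ.mul_def] at this
      rw [IZ.pcomp] at this
      rw [this, hc]
    rw [Option.bind_eq_some_iff] at heq
    obtain ⟨d, hd, hdc⟩ := heq
    have hex : ∃ a c, β.1 x = some c ∧ α.1 a = some c := ⟨d, c, hc, hdc⟩
    obtain ⟨c', hc', hac'⟩ := hex.choose_spec
    have hcc : c' = c := by
      have : some c' = some c := by rw [← hc', ← hc]
      exact Option.some_inj.mp this
    subst hcc
    have : hex.choose = d := α.2.inj hac' hdc
    rw [hd]
    simp only [hh]
    rw [dif_pos hex, this]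
end

section
/- Let S be a semigroup and h : 𝓘↗∞(ℤ) → S a semigroup homomorphism. If there exist distinct idempotents ε, φ ∈ 𝓘↗∞(ℤ) with h(ε) = h(φ), then h(ψ) = h(𝕀) for every idempotent ψ of 𝓘↗∞(ℤ), where 𝕀 is the identity map of ℤ. -/
section Aux

open IZ

theorem iz_mul_apply (a b : IZ) (x : ℤ) : (a * b).1 x = (a.1 x).bind b.1 := rfl

theorem iz_one_apply (x : ℤ) : (1 : IZ).1 x = some x := rfl

theorem idem_some {ψ : IZ} (hψ : ψ * ψ = ψ) {x a : ℤ} (hx : ψ.1 x = some a) : a = x := by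
  have h2 : (ψ * ψ).1 x = ψ.1 x := by rw [hψ]
  rw [iz_mul_apply, hx] at h2
  simp only [Option.bind_some] at h2
  exact ψ.2.inj h2 hx

theorem idem_dich {ψ : IZ} (hψ : ψ * ψ = ψ) (x : ℤ) :
    ψ.1 x = some x ∨ ψ.1 x = none := by
  cases hx : ψ.1 x with
  | none => exact Or.inr rfl
  | some a => exact Or.inl (by rw [idem_some hψ hx])

theorem isMIP_pid {f : ℤ → Option ℤ} (hf : ∀ x, f x = some x ∨ f x = none)
    (hfin : {x : ℤ | f x = none}.Finite) : IsMIP f := by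
  refine ⟨?_, ?_, hfin, ?_⟩
  · intro x y a hx hy
    have h1 : a = x := by rcases hf x with h | h <;> rw [h] at hx <;> simp_all
    have h2 : a = y := by rcases hf y with h | h <;> rw [h] at hy <;> simp_all
    omega
  · intro x y a b hx hy hxy
    have h1 : a = x := by rcases hf x with h | h <;> rw [h] at hx <;> simp_all
    have h2 : b = y := by rcases hf y with h | h <;> rw [h] at hy <;> simp_all
    omega
  · refine hfin.subset fun y hy => ?_
    simp only [Set.mem_setOf_eq] at hy ⊢
    rcases hf y with h | h
    · exact absurd h (hy y)
    · exact h

/-- The partial identity missing exactly the point `q`. -/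
def piz (q : ℤ) : IZ :=
  ⟨fun x => if x = q then none else some x,
   isMIP_pid (fun x => by split_ifs <;> simp)
     (Set.Finite.subset (Set.finite_singleton q) (fun x hx => by
        simp only [Set.mem_setOf_eq] at hx
        by_contra hq
        simp only [Set.mem_singleton_iff] at hq
        rw [if_neg hq] at hx
        exact nomatch hx))⟩

theorem piz_apply (q x : ℤ) : (piz q).1 x = if x = q then none else some x := rfl

theorem piz_idem (q : ℤ) : piz q * piz q = piz q := by
  apply Subtype.ext; funext x
  rw [iz_mul_apply, piz_apply]
  split_ifs with hq <;> simp [piz_apply, hq]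

/-- Key lemma: if `h` identifies two idempotents whose domains differ at `p`,
then `h (piz p) = h 1`. -/
theorem key {S : Type*} [Semigroup S] (h : IZ → S)
    (hhom : ∀ a b : IZ, h (a * b) = h a * h b)
    (ε φ : IZ) (hε : ε * ε = ε) (hφ : φ * φ = φ) (heq : h ε = h φ)
    (p : ℤ) (hp1 : ε.1 p = some p) (hp2 : φ.1 p = none) :
    h (piz p) = h 1 := by
  set d : IZ := ε * φ with hd
  have hdapp : ∀ x, d.1 x = (ε.1 x).bind φ.1 := fun x => rfl
  have hdich : ∀ x, d.1 x = some x ∨ d.1 x = none := by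
    intro x
    rw [hdapp]
    rcases idem_dich hε x with h1 | h1 <;> rw [h1]
    · rcases idem_dich hφ x with h2 | h2 <;> simp [h2]
    · simp
  have hdp : d.1 p = none := by rw [hdapp, hp1]; simp [hp2]
  -- bound on the holes of d
  set T : Finset ℤ := d.2.cofin_dom.toFinset with hT
  set N : ℕ := T.sup (fun x => (x - p).natAbs) + 1 with hN
  set K : ℤ := (N : ℤ) with hKdef
  have hK1 : (1 : ℤ) ≤ K := by
    have : 1 ≤ N := Nat.le_add_left 1 _
    omega
  have hKb : ∀ x : ℤ, d.1 x = none → (x - p).natAbs < N := by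
    intro x hx
    have hxT : x ∈ T := by rw [hT]; exact d.2.cofin_dom.mem_toFinset.2 hx
    have := Finset.le_sup (f := fun x : ℤ => (x - p).natAbs) hxT
    omega
  have hKd : ∀ x : ℤ, (N : ℤ) ≤ (x - p).natAbs → d.1 x = some x := by
    intro x hx
    rcases hdich x with h1 | h1
    · exact h1
    · have := hKb x h1; omega
  -- g : partial identity on dom d ∪ {p}
  have hgdich : ∀ x, (fun x => if x = p then some p else d.1 x) x = some x ∨
      (fun x => if x = p then some p else d.1 x) x = none := by
    intro x
    simp only
    split_ifs with hq
    · subst hq; exact Or.inl rfl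
    · exact hdich x
  set g : IZ := ⟨fun x => if x = p then some p else d.1 x,
    isMIP_pid hgdich (d.2.cofin_dom.subset (fun x hx => by
      simp only [Set.mem_setOf_eq] at hx ⊢
      by_cases hq : x = p
      · rw [if_pos hq] at hx; exact nomatch hx
      · rw [if_neg hq] at hx; exact hx))⟩ with hg
  have hgapp : ∀ x, g.1 x = if x = p then some p else d.1 x := fun x => rfl
  have hεg : ε * g = g := by
    apply Subtype.ext; funext x
    rw [iz_mul_apply, hgapp]
    rcases idem_dich hε x with h1 | h1 <;> rw [h1]
    · simp [hgapp]
    · have hxp : x ≠ p := fun hc => by rw [hc, hp1] at h1; simp at h1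
      have : d.1 x = none := by rw [hdapp, h1]; rfl
      simp [hxp, this]
  have hφg : φ * g = d := by
    apply Subtype.ext; funext x
    rw [iz_mul_apply, hdapp]
    rcases idem_dich hφ x with h1 | h1 <;> rw [h1]
    · have hxp : x ≠ p := fun hc => by rw [hc, hp2] at h1; simp at h1
      simp only [Option.bind_some]
      rw [hgapp, if_neg hxp]
      exact hdapp x
    · simp only [Option.bind_none]
      rcases idem_dich hε x with h2 | h2 <;> rw [h2] <;> simp [h1]
  have hgd : h g = h d := by
    have e1 : h g = h ε * h g := by rw [← hhom, hεg]
    rw [e1, heq, ← hhom, hφg]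
  -- the elements a and b
  have haMIP : IsMIP (fun x : ℤ => some (if x < p then x - K else if x = p then p else x + K)) := by
    refine ⟨?_, ?_, ?_, ?_⟩
    · intro x y a hx hy
      simp only [Option.some_inj] at hx hy
      split_ifs at hx hy <;> omega
    · intro x y a b hx hy hxy
      simp only [Option.some_inj] at hx hy
      split_ifs at hx hy <;> omega
    · simp
    · refine (Set.finite_Icc (p - K) (p + K)).subset fun y hy => ?_
      simp only [Set.mem_setOf_eq] at hy
      by_contra hyI
      simp only [Set.mem_Icc, not_and_or, not_le] at hyI
      rcases hyI with h1 | h1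
      · exact hy (y + K) (by
          simp only [Option.some_inj]
          rw [if_pos (by omega)]; omega)
      · exact hy (y - K) (by
          simp only [Option.some_inj]
          rw [if_neg (by omega), if_neg (by omega)]; omega)
  set a : IZ := ⟨fun x : ℤ => some (if x < p then x - K else if x = p then p else x + K), haMIP⟩
    with ha
  have haapp : ∀ x, a.1 x = some (if x < p then x - K else if x = p then p else x + K) :=
    fun x => rfl
  have hbMIP : IsMIP (fun y : ℤ => if y + K < p then some (y + K) else if y = p then some p
      else if p + K < y then some (y - K) else none) := by
    refine ⟨?_, ?_, ?_, ?_⟩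
    · intro x y a hx hy
      split_ifs at hx hy <;> simp only [Option.some_inj] at hx hy <;> omega
    · intro x y a b hx hy hxy
      split_ifs at hx hy <;> simp only [Option.some_inj] at hx hy <;> omega
    · refine (Set.finite_Icc (p - K) (p + K)).subset fun y hy => ?_
      simp only [Set.mem_setOf_eq] at hy
      split_ifs at hy with h1 h2 h3
      simp only [Set.mem_Icc]; omega
    · refine Set.Finite.subset (Set.finite_empty) fun x hx => ?_
      simp only [Set.mem_setOf_eq] at hx
      exfalso
      rcases lt_trichotomy x p with h1 | h1 | h1
      · exact hx (x - K) (by rw [if_pos (by omega)]; simp)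
      · exact hx p (by rw [if_neg (by omega), if_pos rfl, h1])
      · exact hx (x + K) (by
          rw [if_neg (by omega), if_neg (by omega), if_pos (by omega)]
          simp)
  set b : IZ := ⟨fun y : ℤ => if y + K < p then some (y + K) else if y = p then some p
      else if p + K < y then some (y - K) else none, hbMIP⟩ with hb
  have hbapp : ∀ y, b.1 y = if y + K < p then some (y + K) else if y = p then some p
      else if p + K < y then some (y - K) else none := fun y => rfl
  -- a then b is the identity
  have hba : ∀ x : ℤ, b.1 (if x < p then x - K else if x = p then p else x + K) = some x := by
    intro x
    rw [hbapp]
    split_ifs <;>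
      first
      | (simp only [Option.some_inj]; omega)
      | (exfalso; omega)
  -- for x ≠ p, the image under a lies in dom d (and equals its own d-image)
  have hda : ∀ x : ℤ, x ≠ p →
      d.1 (if x < p then x - K else if x = p then p else x + K) =
        some (if x < p then x - K else if x = p then p else x + K) := by
    intro x hxp
    apply hKd
    split_ifs <;> omega
  have hga : ∀ x : ℤ,
      g.1 (if x < p then x - K else if x = p then p else x + K) =
        some (if x < p then x - K else if x = p then p else x + K) := by
    intro x
    rw [hgapp]
    by_cases hxp : x = p
    · subst hxp; simp
    · rw [if_neg (by split_ifs with h1 h2 <;> omega)]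
      exact hda x hxp
  have hagb : a * (g * b) = 1 := by
    apply Subtype.ext; funext x
    rw [iz_mul_apply, haapp, Option.bind_some, iz_mul_apply, hga, Option.bind_some, hba, iz_one_apply]
  have hadb : a * (d * b) = piz p := by
    apply Subtype.ext; funext x
    rw [iz_mul_apply, haapp, Option.bind_some, iz_mul_apply, piz_apply]
    by_cases hxp : x = p
    · subst hxp; simp [hdp]
    · rw [hda x hxp, Option.bind_some, hba, if_neg hxp]
  have : h (piz p) = h a * (h d * h b) := by
    rw [← hhom, ← hhom, hadb]
  rw [this, ← hgd, ← hhom, ← hhom, hagb]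

theorem piz_eq_one {S : Type*} [Semigroup S] (h : IZ → S)
    (hhom : ∀ a b : IZ, h (a * b) = h a * h b)
    (p : ℤ) (hp : h (piz p) = h 1) (q : ℤ) : h (piz q) = h 1 := by
  set c : ℤ := q - p with hc
  have htMIP : IsMIP (fun x : ℤ => some (x + c)) := by
    refine ⟨?_, ?_, ?_, ?_⟩
    · intro x y a hx hy; simp_all; omega
    · intro x y a b hx hy hxy; simp_all; omega
    · simp
    · refine Set.Finite.subset (Set.finite_empty) fun y hy => ?_
      simp only [Set.mem_setOf_eq] at hy
      exact absurd (by simp : (fun x : ℤ => some (x + c)) (y - c) = some y) (hy (y - c))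
  have htMIP' : IsMIP (fun x : ℤ => some (x - c)) := by
    refine ⟨?_, ?_, ?_, ?_⟩
    · intro x y a hx hy; simp_all; omega
    · intro x y a b hx hy hxy; simp_all; omega
    · simp
    · refine Set.Finite.subset (Set.finite_empty) fun y hy => ?_
      simp only [Set.mem_setOf_eq] at hy
      exact absurd (by simp : (fun x : ℤ => some (x - c)) (y + c) = some y) (hy (y + c))
  set t : IZ := ⟨fun x : ℤ => some (x + c), htMIP⟩ with ht
  set t' : IZ := ⟨fun x : ℤ => some (x - c), htMIP'⟩ with ht'
  have h1 : t' * (piz p * t) = piz q := by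
    apply Subtype.ext; funext x
    rw [iz_mul_apply, Option.bind_some, iz_mul_apply, piz_apply, piz_apply]
    split_ifs with e1 e2 e2
    · rfl
    · omega
    · omega
    · show some (x - c + c) = some x
      congr 1; omega
  have h2 : t' * (1 * t) = 1 := by
    rw [one_mul]
    apply Subtype.ext; funext x
    rw [iz_mul_apply]
    show ((some (x - c)).bind fun x => some (x + c)) = some x
    simp
  calc h (piz q) = h t' * (h (piz p) * h t) := by rw [← hhom, ← hhom, h1]
    _ = h t' * (h 1 * h t) := by rw [hp]
    _ = h 1 := by rw [← hhom, ← hhom, h2]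

end Aux

/-- If a semigroup homomorphism `h` from `𝓘↗∞(ℤ)` to a semigroup `S`
identifies two distinct idempotents, then it identifies every idempotent with `h 𝕀`. -/
theorem statement13 {S : Type*} [Semigroup S] (h : IZ → S)
    (hhom : ∀ a b : IZ, h (a * b) = h a * h b)
    (ε φ : IZ) (hε : ε * ε = ε) (hφ : φ * φ = φ) (hne : ε ≠ φ)
    (heq : h ε = h φ) :
    ∀ ψ : IZ, ψ * ψ = ψ → h ψ = h 1 := by
  -- locate a point where the domains of ε and φ differ
  have hpiz : ∀ q : ℤ, h (piz q) = h 1 := by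
    have hdiff : ∃ x, ε.1 x ≠ φ.1 x := by
      by_contra hc
      push_neg at hc
      exact hne (Subtype.ext (funext hc))
    obtain ⟨p, hp⟩ := hdiff
    have hp0 : h (piz p) = h 1 := by
      rcases idem_dich hε p with h1 | h1 <;> rcases idem_dich hφ p with h2 | h2
      · exact absurd (h1.trans h2.symm) hp
      · exact key h hhom ε φ hε hφ heq p h1 h2
      · exact key h hhom φ ε hφ hε heq.symm p h2 h1
      · exact absurd (h1.trans h2.symm) hp
    exact piz_eq_one h hhom p hp0
  -- induction on the number of holes
  have main : ∀ n : ℕ, ∀ ψ : IZ, ψ * ψ = ψ → {x : ℤ | ψ.1 x = none}.ncard ≤ n → h ψ = h 1 := by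
    intro n
    induction n with
    | zero =>
      intro ψ hψ hcard
      have hempty : {x : ℤ | ψ.1 x = none} = ∅ := by
        have := ψ.2.cofin_dom
        rw [← Set.ncard_eq_zero this]
        omega
      have : ψ = 1 := by
        apply Subtype.ext; funext x
        rcases idem_dich hψ x with h1 | h1
        · exact h1
        · exact absurd (Set.eq_empty_iff_forall_notMem.1 hempty x) (fun hc => hc h1)
      rw [this]
    | succ n ih =>
      intro ψ hψ hcard
      by_cases hem : {x : ℤ | ψ.1 x = none} = ∅
      · have : ψ = 1 := by
          apply Subtype.ext; funext x
          rcases idem_dich hψ x with h1 | h1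
          · exact h1
          · exact absurd (Set.eq_empty_iff_forall_notMem.1 hem x) (fun hc => hc h1)
        rw [this]
      · obtain ⟨q, hq⟩ := Set.nonempty_iff_ne_empty.2 hem
        simp only [Set.mem_setOf_eq] at hq
        have hψ'dich : ∀ x, (fun x => if x = q then some q else ψ.1 x) x = some x ∨
            (fun x => if x = q then some q else ψ.1 x) x = none := by
          intro x
          simp only
          split_ifs with hx
          · subst hx; exact Or.inl rfl
          · exact idem_dich hψ x
        set ψ' : IZ := ⟨fun x => if x = q then some q else ψ.1 x,
          isMIP_pid hψ'dich (ψ.2.cofin_dom.subset fun x hx => by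
            simp only [Set.mem_setOf_eq] at hx ⊢
            by_cases h1 : x = q
            · rw [if_pos h1] at hx; exact nomatch hx
            · rw [if_neg h1] at hx; exact hx)⟩ with hψ'def
        have hψ'app : ∀ x, ψ'.1 x = if x = q then some q else ψ.1 x := fun _ => rfl
        have hd2 : ∀ x, ψ'.1 x = some x ∨ ψ'.1 x = none := hψ'dich
        have hψ'idem : ψ' * ψ' = ψ' := by
          apply Subtype.ext; funext x
          rw [iz_mul_apply]
          rcases hd2 x with h1 | h1 <;> rw [h1]
          · rw [Option.bind_some]; exact h1
          · rw [Option.bind_none]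
        have hψ'card : {x : ℤ | ψ'.1 x = none}.ncard ≤ n := by
          have hsub : {x : ℤ | ψ'.1 x = none} ⊆ {x : ℤ | ψ.1 x = none} \ {q} := by
            intro x hx
            have hx' : (if x = q then some q else ψ.1 x) = none := hx
            by_cases h1 : x = q
            · rw [if_pos h1] at hx'; exact nomatch hx'
            · rw [if_neg h1] at hx'; exact ⟨hx', h1⟩
          have hfin : {x : ℤ | ψ.1 x = none}.Finite := ψ.2.cofin_dom
          have h1 : ({x : ℤ | ψ.1 x = none} \ {q}).ncard
              = {x : ℤ | ψ.1 x = none}.ncard - 1 := by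
            rw [Set.ncard_diff_singleton_of_mem (show q ∈ {x : ℤ | ψ.1 x = none} from hq)]
          have h2 : 1 ≤ {x : ℤ | ψ.1 x = none}.ncard :=
            (Set.ncard_pos hfin).2 ⟨q, hq⟩
          have h3 := Set.ncard_le_ncard hsub hfin.diff
          omega
        have hfact : piz q * ψ' = ψ := by
          apply Subtype.ext; funext x
          rw [iz_mul_apply, piz_apply]
          split_ifs with h1
          · subst h1; simp [hq]
          · rw [Option.bind_some]
            show (if x = q then some q else ψ.1 x) = ψ.1 x
            rw [if_neg h1]
        calc h ψ = h (piz q) * h ψ' := by rw [← hhom, hfact]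
          _ = h 1 * h 1 := by rw [hpiz q, ih ψ' hψ'idem hψ'card]
          _ = h 1 := by rw [← hhom, one_mul]
  intro ψ hψ
  exact main {x : ℤ | ψ.1 x = none}.ncard ψ hψ le_rfl
end

section
/- Let S be a semigroup and h : 𝓘↗∞(ℤ) → S a semigroup homomorphism that is not constant (not annihilating). Then either h is injective, or the image h(𝓘↗∞(ℤ)) is a subgroup of S (i.e. a subsemigroup that is a group under the induced operation). -/
namespace IZAux
open IZ

open scoped Classical

lemma iz_ext {a b : IZ} (hab : ∀ x, a.1 x = b.1 x) : a = b := Subtype.ext (funext hab)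

lemma mul_apply (a b : IZ) (x : ℤ) : (a * b).1 x = (a.1 x).bind b.1 := rfl

/-! ### Inverses -/

noncomputable def invFun (f : ℤ → Option ℤ) : ℤ → Option ℤ := fun y =>
  if hf : ∃ x, f x = some y then some hf.choose else none

lemma invFun_some {f : ℤ → Option ℤ} (hf : IsMIP f) {x y : ℤ} :
    invFun f y = some x ↔ f x = some y := by
  constructor
  · intro hxy
    by_cases he : ∃ z, f z = some y
    · rw [invFun, dif_pos he] at hxy
      have := Option.some.inj hxy
      exact this ▸ he.choose_spec
    · rw [invFun, dif_neg he] at hxy; exact absurd hxy (by simp)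
  · intro hxy
    have he : ∃ z, f z = some y := ⟨x, hxy⟩
    rw [invFun, dif_pos he]
    exact congrArg some (hf.inj he.choose_spec hxy)

lemma invFun_none {f : ℤ → Option ℤ} {y : ℤ} :
    invFun f y = none ↔ ∀ x, f x ≠ some y := by
  by_cases he : ∃ x, f x = some y
  · rw [invFun, dif_pos he]
    constructor
    · intro hc; exact absurd hc (by simp)
    · intro hc
      obtain ⟨x, hx⟩ := he
      exact absurd hx (hc x)
  · rw [invFun, dif_neg he]
    push_neg at he
    simp [he]

noncomputable def inv (a : IZ) : IZ := by
  refine ⟨invFun a.1, ?_, ?_, ?_, ?_⟩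
  · intro x y z h1 h2
    have h1' := (invFun_some a.2).mp h1
    have h2' := (invFun_some a.2).mp h2
    exact Option.some.inj (h1'.symm.trans h2')
  · intro x y zx zy h1 h2 hxy
    have h1' := (invFun_some a.2).mp h1
    have h2' := (invFun_some a.2).mp h2
    by_contra hlt
    push_neg at hlt
    have hyx : y ≤ x := a.2.mono h2' h1' hlt.le
    have hxy' : x = y := le_antisymm hxy hyx
    subst hxy'
    exact absurd (a.2.inj h1' h2') (by omega)
  · have : {y : ℤ | invFun a.1 y = none} = {y : ℤ | ∀ x, a.1 x ≠ some y} := by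
      ext y; exact invFun_none
    rw [this]; exact a.2.cofin_ran
  · apply Set.Finite.subset a.2.cofin_dom
    intro x hx
    simp only [Set.mem_setOf_eq] at hx ⊢
    by_contra hne
    obtain ⟨y, hy⟩ := Option.ne_none_iff_exists'.mp hne
    exact hx y ((invFun_some a.2).mpr hy)

lemma inv_apply (a : IZ) (y : ℤ) : (inv a).1 y = invFun a.1 y := rfl

/-! ### Partial identities -/

noncomputable def eps (C : Set ℤ) (hC : Cᶜ.Finite) : IZ := by
  refine ⟨fun x => if x ∈ C then some x else none, ?_, ?_, ?_, ?_⟩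
  · intro x y z h1 h2
    split_ifs at h1 h2 <;> simp_all
  · intro x y z w h1 h2 hxy
    split_ifs at h1 h2 <;> simp_all
  · apply Set.Finite.subset hC
    intro x hx
    simp only [Set.mem_setOf_eq] at hx
    by_contra hc
    rw [Set.notMem_compl_iff] at hc
    rw [if_pos hc] at hx
    exact absurd hx (by simp)
  · apply Set.Finite.subset hC
    intro y hy
    simp only [Set.mem_setOf_eq] at hy
    by_contra hc
    rw [Set.notMem_compl_iff] at hc
    exact hy y (by rw [if_pos hc])

lemma eps_apply_mem {C : Set ℤ} {hC : Cᶜ.Finite} {x : ℤ} (hx : x ∈ C) :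
    (eps C hC).1 x = some x := if_pos hx

lemma eps_apply_not_mem {C : Set ℤ} {hC : Cᶜ.Finite} {x : ℤ} (hx : x ∉ C) :
    (eps C hC).1 x = none := if_neg hx

lemma eps_congr {C D : Set ℤ} (hC : Cᶜ.Finite) (hD : Dᶜ.Finite) (hCD : C = D) :
    eps C hC = eps D hD := by subst hCD; rfl

lemma eps_univ (hf : (Set.univ : Set ℤ)ᶜ.Finite) : eps Set.univ hf = 1 := by
  apply iz_ext; intro x
  rw [eps_apply_mem (Set.mem_univ x)]; rfl

lemma univ_compl_finite : (Set.univ : Set ℤ)ᶜ.Finite := by simp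

lemma dom_compl_finite (a : IZ) : (IZ.dom a)ᶜ.Finite := by
  have : (IZ.dom a)ᶜ = {x : ℤ | a.1 x = none} := by
    ext x; simp [IZ.dom]
  rw [this]; exact a.2.cofin_dom

lemma ran_compl_finite (a : IZ) : (IZ.ran a)ᶜ.Finite := by
  have : (IZ.ran a)ᶜ = {y : ℤ | ∀ x, a.1 x ≠ some y} := by
    ext y; simp [IZ.ran]
  rw [this]; exact a.2.cofin_ran

lemma mul_inv (a : IZ) : a * inv a = eps (IZ.dom a) (dom_compl_finite a) := by
  apply iz_ext; intro x
  rw [mul_apply]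
  cases hx : a.1 x with
  | none =>
    have hxd : x ∉ IZ.dom a := by simp [IZ.dom, hx]
    rw [eps_apply_not_mem hxd]; rfl
  | some y =>
    have hxd : x ∈ IZ.dom a := by simp [IZ.dom, hx]
    rw [eps_apply_mem hxd]
    simp only [Option.bind_some]
    exact (invFun_some a.2).mpr hx

lemma inv_mul (a : IZ) : inv a * a = eps (IZ.ran a) (ran_compl_finite a) := by
  apply iz_ext; intro y
  rw [mul_apply]
  by_cases he : ∃ x, a.1 x = some y
  · have h1 : invFun a.1 y = some he.choose := by rw [invFun, dif_pos he]
    have hyr : y ∈ IZ.ran a := he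
    rw [eps_apply_mem hyr, inv_apply, h1]
    simp only [Option.bind_some]
    exact he.choose_spec
  · have h1 : invFun a.1 y = none := by rw [invFun, dif_neg he]
    have hyr : y ∉ IZ.ran a := he
    rw [eps_apply_not_mem hyr, inv_apply, h1]; rfl

lemma mul_inv_of_total (a : IZ) (ht : ∀ x, a.1 x ≠ none) : a * inv a = 1 := by
  apply iz_ext; intro x
  rw [mul_apply]
  cases hx : a.1 x with
  | none => exact absurd hx (ht x)
  | some y =>
    simp only [Option.bind_some]
    rw [show (1 : IZ).1 x = some x from rfl]
    exact (invFun_some a.2).mpr hx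

/-! ### Shifts -/

def shift (k : ℤ) : IZ := by
  refine ⟨fun x => some (x + k), ?_, ?_, ?_, ?_⟩
  · intro x y z h1 h2; simp only [Option.some.injEq] at h1 h2; omega
  · intro x y z w h1 h2 hxy; simp only [Option.some.injEq] at h1 h2; omega
  · simp
  · apply Set.Finite.subset Set.finite_empty
    intro y hy
    simp only [Set.mem_setOf_eq] at hy
    exact absurd (congrArg some (show y - k + k = y by ring)) (hy (y - k))

lemma shift_mul (k m : ℤ) : shift k * shift m = shift (k + m) := by
  apply iz_ext; intro x
  rw [mul_apply]
  show (some (x + k)).bind _ = some (x + (k + m))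
  simp only [Option.bind_some, shift]
  exact congrArg some (by ring)

lemma shift_zero : shift 0 = 1 := by
  apply iz_ext; intro x
  show some (x + 0) = some x
  rw [add_zero]

/-! ### Jumps -/

def jump (x K : ℤ) (hK : 0 ≤ K) : IZ := by
  refine ⟨fun z => some (if z < x then z - K else if z = x then z else z + K), ?_, ?_, ?_, ?_⟩
  · intro z w v h1 h2
    simp only [Option.some.injEq] at h1 h2
    split_ifs at h1 h2 <;> omega
  · intro z w v u h1 h2 hzw
    simp only [Option.some.injEq] at h1 h2
    split_ifs at h1 h2 <;> omega
  · simp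
  · apply Set.Finite.subset (Set.finite_Icc (x - K) (x + K))
    intro y hy
    simp only [Set.mem_setOf_eq] at hy
    simp only [Set.mem_Icc]
    by_contra hc
    rw [not_and_or] at hc
    rcases hc with hc | hc
    · push_neg at hc
      exact hy (y + K) (congrArg some (by split_ifs <;> omega))
    · push_neg at hc
      exact hy (y - K) (congrArg some (by split_ifs <;> omega))

lemma jump_apply (x K : ℤ) (hK : 0 ≤ K) (z : ℤ) :
    (jump x K hK).1 z = some (if z < x then z - K else if z = x then z else z + K) := rfl

lemma jump_apply_self (x K : ℤ) (hK : 0 ≤ K) : (jump x K hK).1 x = some x := by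
  rw [jump_apply, if_neg (lt_irrefl x), if_pos rfl]

lemma jump_total (x K : ℤ) (hK : 0 ≤ K) : ∀ z, (jump x K hK).1 z ≠ none := by
  intro z; rw [jump_apply]; simp

lemma inv_jump_none (x K : ℤ) (hK : 0 ≤ K) {y : ℤ} (h1 : x - K ≤ y) (h2 : y ≤ x + K)
    (h3 : y ≠ x) : invFun (jump x K hK).1 y = none := by
  rw [invFun_none]
  intro z hz
  rw [jump_apply] at hz
  have := Option.some.inj hz
  split_ifs at this <;> omega

end IZAux

namespace IZAux
open IZ

section Hom

variable {S : Type*} [Semigroup S] (h : IZ → S)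
  (hhom : ∀ a b : IZ, h (a * b) = h a * h b)

include hhom

lemma h3 (a b c : IZ) : h (a * b * c) = h a * h b * h c := by
  rw [hhom, hhom]

/-- If `h w = h 1` and `w` is undefined somewhere, then a nontrivial partial identity
is `h`-equivalent to `1`. -/
lemma step_none {w : IZ} (hw : h w = h 1) {x₀ : ℤ} (hx : w.1 x₀ = none) :
    ∃ (D : Set ℤ) (hD : Dᶜ.Finite) (z : ℤ), z ∉ D ∧ h (eps D hD) = h 1 := by
  refine ⟨IZ.dom w, dom_compl_finite w, x₀, by simp [IZ.dom, hx], ?_⟩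
  have key : eps (IZ.dom w) (dom_compl_finite w) * w = w := by
    apply iz_ext; intro z
    rw [mul_apply]
    by_cases hz : z ∈ IZ.dom w
    · rw [eps_apply_mem hz]; rfl
    · rw [eps_apply_not_mem hz]
      simp only [IZ.dom, Set.mem_setOf_eq, not_not] at hz
      rw [hz]; rfl
  calc h (eps (IZ.dom w) (dom_compl_finite w))
      = h (eps (IZ.dom w) (dom_compl_finite w) * 1) := by rw [mul_one]
    _ = h (eps (IZ.dom w) (dom_compl_finite w)) * h 1 := hhom _ _
    _ = h (eps (IZ.dom w) (dom_compl_finite w)) * h w := by rw [hw]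
    _ = h (eps (IZ.dom w) (dom_compl_finite w) * w) := (hhom _ _).symm
    _ = h w := by rw [key]
    _ = h 1 := hw

/-- If `h w = h 1` and `w` moves some point, then a nontrivial partial identity
is `h`-equivalent to `1`. -/
lemma step_some {w : IZ} (hw : h w = h 1) {x₀ y₀ : ℤ} (hxy : w.1 x₀ = some y₀)
    (hne : y₀ ≠ x₀) :
    ∃ (D : Set ℤ) (hD : Dᶜ.Finite) (z : ℤ), z ∉ D ∧ h (eps D hD) = h 1 := by
  set K : ℤ := |y₀ - x₀| with hKdef
  have hK : 0 ≤ K := abs_nonneg _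
  set d : IZ := jump x₀ K hK with hd
  have habs1 : y₀ - x₀ ≤ K := le_abs_self _
  have habs2 : -K ≤ y₀ - x₀ := neg_abs_le _
  have h1 : (d * w * inv d).1 x₀ = none := by
    rw [mul_apply, mul_apply, jump_apply_self]
    simp only [Option.bind_some]
    rw [hxy]
    simp only [Option.bind_some]
    exact inv_jump_none x₀ K hK (by omega) (by omega) hne
  have hw' : h (d * w * inv d) = h 1 := by
    calc h (d * w * inv d) = h d * h w * h (inv d) := h3 h hhom d w (inv d)
      _ = h d * h 1 * h (inv d) := by rw [hw]
      _ = h (d * 1) * h (inv d) := by rw [hhom]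
      _ = h d * h (inv d) := by rw [mul_one]
      _ = h (d * inv d) := (hhom _ _).symm
      _ = h 1 := by rw [mul_inv_of_total d (jump_total x₀ K hK)]
  exact step_none h hhom hw' h1

lemma exists_w_aux {a b : IZ} (hab : h a = h b) {x p : ℤ} (hp : a.1 x = some p)
    (hq : b.1 x ≠ some p) :
    ∃ w : IZ, h w = h 1 ∧ w.1 x ≠ some x := by
  set C : Set ℤ := IZ.dom a with hCdef
  have hC : Cᶜ.Finite := dom_compl_finite a
  have hxC : x ∈ C := by simp [hCdef, IZ.dom, hp]
  -- bound for the complement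
  obtain ⟨M, hM⟩ := (hC.image (fun z => |z|)).bddAbove
  have hMb : ∀ y, y ∉ C → |y| ≤ M := fun y hy => hM ⟨y, hy, rfl⟩
  set K : ℤ := |M| + |x| + 1 with hKdef
  have hK : 0 ≤ K := by
    have := abs_nonneg M; have := abs_nonneg x; omega
  set c : IZ := jump x K hK with hc
  have hran : ∀ z v : ℤ, c.1 z = some v → v ∈ C := by
    intro z v hzv
    rw [hc, jump_apply] at hzv
    have hv := Option.some.inj hzv
    by_contra hvC
    have hb1 : |v| ≤ M := hMb v hvC
    have hb2 : M ≤ |M| := le_abs_self M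
    have hb3 : -|v| ≤ v := neg_abs_le v
    have hb4 : v ≤ |v| := le_abs_self v
    have hb5 : -|x| ≤ x := neg_abs_le x
    have hb6 : x ≤ |x| := le_abs_self x
    have hb7 : 0 ≤ |v| := abs_nonneg v
    split_ifs at hv with hlt heq
    · omega
    · have hvx : v = x := by omega
      exact hvC (hvx ▸ hxC)
    · omega
  have ceps : c * eps C hC * inv c = 1 := by
    apply iz_ext; intro z
    rw [mul_apply, mul_apply]
    obtain ⟨v, hv⟩ : ∃ v, c.1 z = some v := ⟨_, rfl⟩
    rw [hv]
    simp only [Option.bind_some]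
    rw [eps_apply_mem (hran z v hv)]
    simp only [Option.bind_some]
    rw [show (1 : IZ).1 z = some z from rfl]
    exact (invFun_some c.2).mpr hv
  set v : IZ := b * inv a with hvdef
  have hveq : h v = h (eps C hC) := by
    calc h (b * inv a) = h b * h (inv a) := hhom _ _
      _ = h a * h (inv a) := by rw [hab]
      _ = h (a * inv a) := (hhom _ _).symm
      _ = h (eps C hC) := by rw [mul_inv a]
  have hvne : v.1 x ≠ some x := by
    rw [hvdef, mul_apply]
    cases hbx : b.1 x with
    | none => simp
    | some q =>
      simp only [Option.bind_some]
      intro hcon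
      have : a.1 x = some q := (invFun_some a.2).mp hcon
      rw [hp] at this
      exact hq (hbx.trans (Option.some.inj this ▸ rfl))
  refine ⟨c * v * inv c, ?_, ?_⟩
  · calc h (c * v * inv c) = h c * h v * h (inv c) := h3 h hhom c v (inv c)
      _ = h c * h (eps C hC) * h (inv c) := by rw [hveq]
      _ = h (c * eps C hC * inv c) := (h3 h hhom c _ (inv c)).symm
      _ = h 1 := by rw [ceps]
  · rw [mul_apply, mul_apply, jump_apply_self]
    simp only [Option.bind_some]
    cases hvx : v.1 x with
    | none => simp
    | some y =>
      have hyx : y ≠ x := by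
        intro hcon; rw [hcon] at hvx; exact hvne hvx
      simp only [Option.bind_some]
      cases hiy : (inv c).1 y with
      | none => simp
      | some z =>
        intro hcon
        have hz : z = x := Option.some.inj hcon
        subst hz
        have : c.1 z = some y := (invFun_some c.2).mp hiy
        rw [jump_apply_self] at this
        exact hyx (Option.some.inj this).symm

/-- From non-injectivity, some nontrivial partial identity is `h`-equivalent to `1`. -/
lemma exists_eps_ne (hni : ¬ Function.Injective h) :
    ∃ (D : Set ℤ) (hD : Dᶜ.Finite) (z : ℤ), z ∉ D ∧ h (eps D hD) = h 1 := by
  rw [Function.not_injective_iff] at hni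
  obtain ⟨a, b, hab, hne⟩ := hni
  have hx : ∃ x, a.1 x ≠ b.1 x := by
    by_contra hcon
    push_neg at hcon
    exact hne (iz_ext hcon)
  obtain ⟨x, hx⟩ := hx
  have hW : ∃ w : IZ, h w = h 1 ∧ w.1 x ≠ some x := by
    cases ha : a.1 x with
    | some p =>
      refine exists_w_aux h hhom hab ha ?_
      intro hc; rw [ha] at hx; exact hx hc.symm
    | none =>
      cases hb : b.1 x with
      | none => rw [ha, hb] at hx; exact absurd rfl hx
      | some q =>
        refine exists_w_aux h hhom hab.symm hb ?_
        rw [ha]; simp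
  obtain ⟨w, hw, hwx⟩ := hW
  cases hwx' : w.1 x with
  | none => exact step_none h hhom hw hwx'
  | some y =>
    have : y ≠ x := by intro hc; rw [hc] at hwx'; exact hwx hwx'
    exact step_some h hhom hw hwx' this

end Hom

end IZAux

namespace IZAux
open IZ

lemma eps_mul_eps {C D : Set ℤ} (hC : Cᶜ.Finite) (hD : Dᶜ.Finite) :
    eps C hC * eps D hD = eps (C ∩ D) (by rw [Set.compl_inter]; exact hC.union hD) := by
  apply iz_ext; intro x
  rw [mul_apply]
  by_cases hxC : x ∈ C
  · rw [eps_apply_mem hxC]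
    simp only [Option.bind_some]
    by_cases hxD : x ∈ D
    · rw [eps_apply_mem hxD, eps_apply_mem (Set.mem_inter hxC hxD)]
    · rw [eps_apply_not_mem hxD, eps_apply_not_mem (fun hc => hxD hc.2)]
  · rw [eps_apply_not_mem hxC, eps_apply_not_mem (fun hc => hxC hc.1)]
    rfl

lemma shiftSet_compl_finite {D : Set ℤ} (hD : Dᶜ.Finite) (k : ℤ) :
    {z : ℤ | z + k ∈ D}ᶜ.Finite := by
  have : {z : ℤ | z + k ∈ D}ᶜ = (fun z => z + k) ⁻¹' Dᶜ := by
    ext z; simp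
  rw [this]
  exact Set.Finite.preimage (Set.injOn_of_injective (add_left_injective k)) hD

lemma shift_conj_eps {D : Set ℤ} (hD : Dᶜ.Finite) (k : ℤ) :
    shift k * eps D hD * shift (-k) =
      eps {z : ℤ | z + k ∈ D} (shiftSet_compl_finite hD k) := by
  apply iz_ext; intro z
  rw [mul_apply, mul_apply]
  rw [show (shift k).1 z = some (z + k) from rfl]
  simp only [Option.bind_some]
  by_cases hz : z + k ∈ D
  · rw [eps_apply_mem hz]
    simp only [Option.bind_some]
    rw [eps_apply_mem (show z ∈ {z : ℤ | z + k ∈ D} from hz)]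
    rw [show (shift (-k)).1 (z + k) = some (z + k + -k) from rfl]
    exact congrArg some (by ring)
  · rw [eps_apply_not_mem hz, eps_apply_not_mem (show z ∉ {z : ℤ | z + k ∈ D} from hz)]
    rfl

section Hom

variable {S : Type*} [Semigroup S] (h : IZ → S)
  (hhom : ∀ a b : IZ, h (a * b) = h a * h b)

include hhom

lemma h_shift_eps {D : Set ℤ} (hD : Dᶜ.Finite) (hD1 : h (eps D hD) = h 1) (k : ℤ) :
    h (eps {z : ℤ | z + k ∈ D} (shiftSet_compl_finite hD k)) = h 1 := by
  rw [← shift_conj_eps hD k]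
  calc h (shift k * eps D hD * shift (-k))
      = h (shift k) * h (eps D hD) * h (shift (-k)) := h3 h hhom _ _ _
    _ = h (shift k) * h 1 * h (shift (-k)) := by rw [hD1]
    _ = h (shift k * 1) * h (shift (-k)) := by rw [hhom]
    _ = h (shift k) * h (shift (-k)) := by rw [mul_one]
    _ = h (shift k * shift (-k)) := (hhom _ _).symm
    _ = h 1 := by
        rw [shift_mul, show k + -k = 0 by ring, shift_zero]

lemma h_inter_eps {C D : Set ℤ} (hC : Cᶜ.Finite) (hD : Dᶜ.Finite)
    (hC1 : h (eps C hC) = h 1) (hD1 : h (eps D hD) = h 1) :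
    h (eps (C ∩ D) (by rw [Set.compl_inter]; exact hC.union hD)) = h 1 := by
  rw [← eps_mul_eps hC hD, hhom, hC1, hD1, ← hhom, mul_one]

lemma h_mono_eps {C E : Set ℤ} (hC : Cᶜ.Finite) (hE : Eᶜ.Finite) (hsub : E ⊆ C)
    (hE1 : h (eps E hE) = h 1) : h (eps C hC) = h 1 := by
  have key : eps C hC * eps E hE = eps E hE := by
    rw [eps_mul_eps hC hE]
    exact eps_congr _ _ (Set.inter_eq_self_of_subset_right hsub)
  calc h (eps C hC) = h (eps C hC * 1) := by rw [mul_one]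
    _ = h (eps C hC) * h 1 := hhom _ _
    _ = h (eps C hC) * h (eps E hE) := by rw [hE1]
    _ = h (eps C hC * eps E hE) := (hhom _ _).symm
    _ = h (eps E hE) := by rw [key]
    _ = h 1 := hE1

lemma exists_eps_avoiding {D : Set ℤ} (hD : Dᶜ.Finite) {x₀ : ℤ} (hx₀ : x₀ ∉ D)
    (hD1 : h (eps D hD) = h 1) (F : Finset ℤ) :
    ∃ (E : Set ℤ) (hE : Eᶜ.Finite), (∀ y ∈ F, y ∉ E) ∧ h (eps E hE) = h 1 := by
  classical
  induction F using Finset.induction_on with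
  | empty => exact ⟨D, hD, by simp, hD1⟩
  | insert _ _ hnotmem ih =>
    rename_i y F0
    obtain ⟨E, hE, hEF, hE1⟩ := ih
    set Sy : Set ℤ := {z : ℤ | z + (x₀ - y) ∈ D} with hSydef
    have hSy : Syᶜ.Finite := shiftSet_compl_finite hD (x₀ - y)
    have hSy1 : h (eps Sy hSy) = h 1 := h_shift_eps h hhom hD hD1 (x₀ - y)
    have hySy : y ∉ Sy := by
      simp only [hSydef, Set.mem_setOf_eq]
      rw [show y + (x₀ - y) = x₀ by ring]
      exact hx₀
    refine ⟨E ∩ Sy, by rw [Set.compl_inter]; exact hE.union hSy, ?_, ?_⟩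
    · intro z hz
      rcases Finset.mem_insert.mp hz with rfl | hz0
      · exact fun hc => hySy hc.2
      · exact fun hc => hEF z hz0 hc.1
    · exact h_inter_eps h hhom hE hSy hE1 hSy1

lemma all_eps {D : Set ℤ} (hD : Dᶜ.Finite) {x₀ : ℤ} (hx₀ : x₀ ∉ D)
    (hD1 : h (eps D hD) = h 1) (C : Set ℤ) (hC : Cᶜ.Finite) :
    h (eps C hC) = h 1 := by
  classical
  obtain ⟨E, hE, hEF, hE1⟩ := exists_eps_avoiding h hhom hD hx₀ hD1 hC.toFinset
  refine h_mono_eps h hhom hC hE ?_ hE1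
  intro z hz
  by_contra hzC
  exact hEF z (hC.mem_toFinset.mpr hzC) hz

end Hom

end IZAux

/-- Every non-constant (non-annihilating) semigroup homomorphism `h` from
`𝓘↗∞(ℤ)` into a semigroup `S` is either injective, or its image is a subgroup of `S`
(a subsemigroup which is a group under the induced operation). -/
theorem statement14 {S : Type*} [Semigroup S] (h : IZ → S)
    (hhom : ∀ a b : IZ, h (a * b) = h a * h b)
    (hnc : ∃ a b : IZ, h a ≠ h b) :
    Function.Injective h ∨
      ((∀ x ∈ Set.range h, ∀ y ∈ Set.range h, x * y ∈ Set.range h) ∧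
        ∃ e ∈ Set.range h, (∀ x ∈ Set.range h, e * x = x ∧ x * e = x) ∧
          ∀ x ∈ Set.range h, ∃ y ∈ Set.range h, x * y = e ∧ y * x = e) := by
  by_cases hinj : Function.Injective h
  · exact Or.inl hinj
  · right
    obtain ⟨D, hD, z₀, hz₀, hD1⟩ := IZAux.exists_eps_ne h hhom hinj
    have hall : ∀ (C : Set ℤ) (hC : Cᶜ.Finite), h (IZAux.eps C hC) = h 1 :=
      IZAux.all_eps h hhom hD hz₀ hD1
    refine ⟨?_, h 1, ⟨1, rfl⟩, ?_, ?_⟩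
    · rintro x ⟨a, rfl⟩ y ⟨b, rfl⟩
      exact ⟨a * b, hhom a b⟩
    · rintro x ⟨a, rfl⟩
      exact ⟨by rw [← hhom, one_mul], by rw [← hhom, mul_one]⟩
    · rintro x ⟨a, rfl⟩
      refine ⟨h (IZAux.inv a), ⟨IZAux.inv a, rfl⟩, ?_, ?_⟩
      · rw [← hhom, IZAux.mul_inv]; exact hall _ _
      · rw [← hhom, IZAux.inv_mul]; exact hall _ _
end

section
/- Let 𝔠 be the relation on 𝓘↗∞(ℤ) defined by: α 𝔠 β if and only if there exists an idempotent ε ∈ 𝓘↗∞(ℤ) with α·ε = β·ε. Then 𝔠 is a semigroup congruence (the least group congruence on this inverse monoid) and the quotient semigroup 𝓘↗∞(ℤ)/𝔠 is isomorphic to the direct product ℤ × ℤ of two copies of the additive group of integers. -/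
namespace IZ

theorem strict (a : IZ) {x y p q : ℤ} (hx : a.1 x = some p) (hy : a.1 y = some q)
    (h : x < y) : p < q := by
  rcases lt_or_eq_of_le (a.2.mono hx hy h.le) with h' | h'
  · exact h'
  · subst h'; exact absurd (a.2.inj hx hy) h.ne

theorem exists_shift_pos (a : IZ) : ∃ c N : ℤ, ∀ n, N ≤ n → a.1 n = some (n + c) := by
  obtain ⟨Nd, hNd⟩ : ∃ Nd : ℤ, ∀ x, Nd ≤ x → a.1 x ≠ none := by
    obtain ⟨B, hB⟩ := a.2.cofin_dom.bddAbove
    exact ⟨B + 1, fun x hx hc => by have := hB hc; omega⟩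
  obtain ⟨Mr, hMr⟩ : ∃ Mr : ℤ, ∀ y, Mr ≤ y → ∃ x, a.1 x = some y := by
    obtain ⟨B, hB⟩ := a.2.cofin_ran.bddAbove
    refine ⟨B + 1, fun y hy => ?_⟩
    by_contra hc
    push_neg at hc
    have : y ∈ {y : ℤ | ∀ x : ℤ, a.1 x ≠ some y} := fun x => hc x
    have := hB this
    omega
  have hg' : ∀ k : ℕ, ∃ v, a.1 (Nd + k) = some v := by
    intro k
    cases h : a.1 (Nd + k) with
    | none => exact absurd h (hNd _ (by omega))
    | some v => exact ⟨v, rfl⟩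
  set g : ℕ → ℤ := fun k => (a.1 (Nd + k)).getD 0 with hgdef
  have hg : ∀ k : ℕ, a.1 (Nd + k) = some (g k) := by
    intro k
    obtain ⟨v, hv⟩ := hg' k
    rw [hv]; simp [hgdef, hv]
  have hgs : ∀ k : ℕ, g k < g (k + 1) := fun k =>
    strict a (hg k) (hg (k + 1)) (by push_cast; omega)
  have hgrow : ∀ k : ℕ, g 0 + k ≤ g k := by
    intro k
    induction k with
    | zero => simp
    | succ n ih => have := hgs n; push_cast at ih ⊢; omega
  have hstep : ∀ k : ℕ, Mr - 1 ≤ g k → g (k + 1) = g k + 1 := by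
    intro k hk
    by_contra hne
    have h1 : g k + 1 < g (k + 1) := by have := hgs k; omega
    obtain ⟨x, hx⟩ := hMr (g k + 1) (by omega)
    rcases le_or_gt x (Nd + k) with h | h
    · have := a.2.mono hx (hg k) h; omega
    · have h2 := a.2.mono (hg (k + 1)) hx (by push_cast; omega)
      omega
  set k₀ : ℕ := (Mr - 1 - g 0).toNat with hk₀def
  have hk0 : Mr - 1 ≤ g k₀ := by
    have := hgrow k₀
    omega
  have hconst : ∀ j : ℕ, g (k₀ + j) = g k₀ + j := by
    intro j
    induction j with
    | zero => simp
    | succ n ih =>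
      have h1 : Mr - 1 ≤ g (k₀ + n) := by push_cast at ih; omega
      have h2 := hstep (k₀ + n) h1
      have h3 : k₀ + (n + 1) = k₀ + n + 1 := by omega
      rw [h3, h2]; push_cast at ih ⊢; omega
  refine ⟨g k₀ - (Nd + k₀), Nd + k₀, fun n hn => ?_⟩
  obtain ⟨j, hj⟩ : ∃ j : ℕ, n = Nd + ((k₀ + j : ℕ) : ℤ) := by
    refine ⟨(n - (Nd + k₀)).toNat, ?_⟩
    push_cast
    omega
  have h1 := hg (k₀ + j)
  rw [hconst j] at h1
  rw [hj, h1]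
  simp only [Option.some_inj]
  push_cast
  ring

def rev (a : IZ) : IZ := ⟨fun x => (a.1 (-x)).map (fun z => -z), by
  constructor
  · intro x y v hx hy
    simp only [Option.map_eq_some_iff] at hx hy
    obtain ⟨p, hp, hpv⟩ := hx
    obtain ⟨q, hq, hqv⟩ := hy
    have hpq : p = q := by omega
    subst hpq
    have := a.2.inj hp hq
    omega
  · intro x y v w hx hy hxy
    simp only [Option.map_eq_some_iff] at hx hy
    obtain ⟨p, hp, hpv⟩ := hx
    obtain ⟨q, hq, hqv⟩ := hy
    have := a.2.mono hq hp (by omega)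
    omega
  · have he : {x : ℤ | (a.1 (-x)).map (fun z => -z) = none} =
        (fun x : ℤ => -x) ⁻¹' {x | a.1 x = none} := by
      ext x; simp
    rw [he]
    exact a.2.cofin_dom.preimage (fun x _ y _ h => by omega)
  · have he : {y : ℤ | ∀ x, (a.1 (-x)).map (fun z => -z) ≠ some y} =
        (fun y : ℤ => -y) ⁻¹' {y | ∀ x, a.1 x ≠ some y} := by
      ext y
      simp only [Set.mem_setOf_eq, Set.mem_preimage]
      constructor
      · intro h x hc
        apply h (-x)
        rw [neg_neg, hc]
        simp
      · intro h x hc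
        rw [Option.map_eq_some_iff] at hc
        obtain ⟨p, hp, hpy⟩ := hc
        have hpe : p = -y := by omega
        exact h (-x) (hpe ▸ hp)
    rw [he]
    exact a.2.cofin_ran.preimage (fun x _ y _ h => by omega)⟩

theorem rev_apply (a : IZ) (x : ℤ) : (rev a).1 x = (a.1 (-x)).map (fun z => -z) := rfl

theorem exists_shift_neg (a : IZ) : ∃ c N : ℤ, ∀ n, n ≤ N → a.1 n = some (n + c) := by
  obtain ⟨c, N, h⟩ := exists_shift_pos (rev a)
  refine ⟨-c, -N, fun n hn => ?_⟩
  have h1 := h (-n) (by omega)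
  rw [rev_apply, neg_neg, Option.map_eq_some_iff] at h1
  obtain ⟨p, hp, hpc⟩ := h1
  have hpe : p = n + -c := by omega
  rw [← hpe]
  exact hp

noncomputable def shiftP (a : IZ) : ℤ := (exists_shift_pos a).choose

theorem shiftP_spec (a : IZ) : ∃ N : ℤ, ∀ n, N ≤ n → a.1 n = some (n + shiftP a) :=
  (exists_shift_pos a).choose_spec

noncomputable def shiftN (a : IZ) : ℤ := (exists_shift_neg a).choose

theorem shiftN_spec (a : IZ) : ∃ N : ℤ, ∀ n, n ≤ N → a.1 n = some (n + shiftN a) :=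
  (exists_shift_neg a).choose_spec

theorem shiftP_eq (a : IZ) {c N : ℤ} (h : ∀ n, N ≤ n → a.1 n = some (n + c)) :
    shiftP a = c := by
  obtain ⟨N', h'⟩ := shiftP_spec a
  have h1 := h (max N N') (le_max_left _ _)
  have h2 := h' (max N N') (le_max_right _ _)
  rw [h1] at h2
  simp only [Option.some_inj] at h2
  omega

theorem shiftN_eq (a : IZ) {c N : ℤ} (h : ∀ n, n ≤ N → a.1 n = some (n + c)) :
    shiftN a = c := by
  obtain ⟨N', h'⟩ := shiftN_spec a
  have h1 := h (min N N') (min_le_left _ _)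
  have h2 := h' (min N N') (min_le_right _ _)
  rw [h1] at h2
  simp only [Option.some_inj] at h2
  omega

theorem shiftP_mul (a b : IZ) : shiftP (a * b) = shiftP a + shiftP b := by
  obtain ⟨Na, ha⟩ := shiftP_spec a
  obtain ⟨Nb, hb⟩ := shiftP_spec b
  refine shiftP_eq _ (N := max Na (Nb - shiftP a)) (fun n hn => ?_)
  have h1 := ha n (le_trans (le_max_left _ _) hn)
  have h2 := hb (n + shiftP a) (by have := le_trans (le_max_right _ _) hn; omega)
  show (a.1 n).bind b.1 = some (n + (shiftP a + shiftP b))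
  rw [h1, Option.bind_some, h2]
  congr 1
  ring

theorem shiftN_mul (a b : IZ) : shiftN (a * b) = shiftN a + shiftN b := by
  obtain ⟨Na, ha⟩ := shiftN_spec a
  obtain ⟨Nb, hb⟩ := shiftN_spec b
  refine shiftN_eq _ (N := min Na (Nb - shiftN a)) (fun n hn => ?_)
  have h1 := ha n (le_trans hn (min_le_left _ _))
  have h2 := hb (n + shiftN a) (by have := le_trans hn (min_le_right _ _); omega)
  show (a.1 n).bind b.1 = some (n + (shiftN a + shiftN b))
  rw [h1, Option.bind_some, h2]
  congr 1
  ring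

theorem idem_eq (ε : IZ) (h : ε * ε = ε) {x y : ℤ} (hx : ε.1 x = some y) : y = x := by
  have h2 : (ε * ε).1 x = ε.1 y := by
    show (ε.1 x).bind ε.1 = _
    rw [hx, Option.bind_some]
  rw [h, hx] at h2
  exact ε.2.inj h2.symm hx

theorem shiftP_idem (ε : IZ) (h : ε * ε = ε) : shiftP ε = 0 := by
  obtain ⟨B, hB⟩ := ε.2.cofin_dom.bddAbove
  refine shiftP_eq _ (N := B + 1) (fun n hn => ?_)
  cases hc : ε.1 n with
  | none => exact absurd (hB hc) (by omega)
  | some y =>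
    have hy := idem_eq ε h hc
    subst hy
    simpa using hc

theorem shiftN_idem (ε : IZ) (h : ε * ε = ε) : shiftN ε = 0 := by
  obtain ⟨B, hB⟩ := ε.2.cofin_dom.bddBelow
  refine shiftN_eq _ (N := B - 1) (fun n hn => ?_)
  cases hc : ε.1 n with
  | none => exact absurd (hB hc) (by omega)
  | some y =>
    have hy := idem_eq ε h hc
    subst hy
    simpa using hc

noncomputable def F (a : IZ) : ℤ × ℤ := (shiftN a, shiftP a)

theorem F_surjective : Function.Surjective F := by
  rintro ⟨p, q⟩
  set M : ℤ := |p - q| + 1 with hM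
  have hM1 : p - q < 2 * M := by
    have := le_abs_self (p - q); have := abs_nonneg (p - q); omega
  have hM0 : 0 < M := by have := abs_nonneg (p - q); omega
  have hmip : IsMIP (fun x : ℤ =>
      if M ≤ x then some (x + q) else if x ≤ -M then some (x + p) else none) := by
    constructor
    · intro x y v hx hy
      split_ifs at hx hy <;> simp only [Option.some_inj] at hx hy <;> omega
    · intro x y v w hx hy hxy
      split_ifs at hx hy <;> simp only [Option.some_inj] at hx hy <;> omega
    · apply Set.Finite.subset (Set.finite_Icc (-M) M)
      intro x hx
      simp only [Set.mem_setOf_eq] at hx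
      split_ifs at hx with h1 h2
      simp only [Set.mem_Icc]
      omega
    · apply Set.Finite.subset (Set.finite_Icc (-M + p) (M + q))
      intro y hy
      simp only [Set.mem_setOf_eq] at hy
      simp only [Set.mem_Icc]
      constructor
      · by_contra hc
        push_neg at hc
        exact hy (y - p) (by rw [if_neg (by omega), if_pos (by omega)]
                             exact congrArg some (by ring))
      · by_contra hc
        push_neg at hc
        exact hy (y - q) (by rw [if_pos (by omega)]
                             exact congrArg some (by ring))
  refine ⟨⟨_, hmip⟩, ?_⟩
  have h1 : shiftP ⟨_, hmip⟩ = q := by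
    refine shiftP_eq _ (N := M) (fun n hn => ?_)
    show (if M ≤ n then some (n + q) else _) = some (n + q)
    rw [if_pos hn]
  have h2 : shiftN ⟨_, hmip⟩ = p := by
    refine shiftN_eq _ (N := -M) (fun n hn => ?_)
    show (if M ≤ n then _ else if n ≤ -M then some (n + p) else _) = some (n + p)
    rw [if_neg (by omega), if_pos hn]
  simp [F, h1, h2]

def pid (L K : ℤ) : IZ := ⟨fun x => if x ≤ L ∨ K ≤ x then some x else none, by
  constructor
  · intro x y v hx hy
    split_ifs at hx hy <;> simp only [Option.some_inj] at hx hy <;> omega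
  · intro x y v w hx hy hxy
    split_ifs at hx hy <;> simp only [Option.some_inj] at hx hy <;> omega
  · apply Set.Finite.subset (Set.finite_Icc L K)
    intro x hx
    simp only [Set.mem_setOf_eq] at hx
    split_ifs at hx with h
    simp only [Set.mem_Icc, not_or, not_le] at h ⊢
    omega
  · apply Set.Finite.subset (Set.finite_Icc L K)
    intro y hy
    simp only [Set.mem_setOf_eq] at hy
    simp only [Set.mem_Icc]
    by_contra hc
    simp only [not_and, not_le] at hc
    exact hy y (if_pos (by omega))⟩

theorem pid_apply (L K x : ℤ) :
    (pid L K).1 x = if x ≤ L ∨ K ≤ x then some x else none := rfl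

theorem pid_idem (L K : ℤ) : pid L K * pid L K = pid L K := by
  apply Subtype.ext
  funext x
  show ((pid L K).1 x).bind (pid L K).1 = (pid L K).1 x
  rw [pid_apply]
  split_ifs with h
  · simp only [Option.bind_some, pid_apply, if_pos h]
  · rfl

theorem c_of_F_eq {a b : IZ} (h : F a = F b) : ∃ ε : IZ, ε * ε = ε ∧ a * ε = b * ε := by
  have hN : shiftN a = shiftN b := congrArg Prod.fst h
  have hP : shiftP a = shiftP b := congrArg Prod.snd h
  obtain ⟨Na, ha⟩ := shiftP_spec a
  obtain ⟨Nb, hb⟩ := shiftP_spec b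
  obtain ⟨Ma, ha'⟩ := shiftN_spec a
  obtain ⟨Mb, hb'⟩ := shiftN_spec b
  set NP := max Na Nb with hNP
  set NM := min Ma Mb with hNM
  have hap : ∀ n, NP ≤ n → a.1 n = some (n + shiftP a) :=
    fun n hn => ha n (le_trans (le_max_left _ _) hn)
  have hbp : ∀ n, NP ≤ n → b.1 n = some (n + shiftP a) := by
    intro n hn
    rw [hP]
    exact hb n (le_trans (le_max_right _ _) hn)
  have han : ∀ n, n ≤ NM → a.1 n = some (n + shiftN a) :=
    fun n hn => ha' n (le_trans hn (min_le_left _ _))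
  have hbn : ∀ n, n ≤ NM → b.1 n = some (n + shiftN a) := by
    intro n hn
    rw [hN]
    exact hb' n (le_trans hn (min_le_right _ _))
  set K := NP + shiftP a + 1 with hK
  set L := NM + shiftN a - 1 with hL
  refine ⟨pid L K, pid_idem L K, ?_⟩
  apply Subtype.ext
  funext x
  show (a.1 x).bind (pid L K).1 = (b.1 x).bind (pid L K).1
  rcases le_or_gt (NP + 1) x with hx | hx
  · rw [hap x (by omega), hbp x (by omega)]
  rcases le_or_gt x (NM - 1) with hx2 | hx2
  · rw [han x (by omega), hbn x (by omega)]
  have key : ∀ γ : IZ, (∀ n, NP ≤ n → γ.1 n = some (n + shiftP a)) →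
      (∀ n, n ≤ NM → γ.1 n = some (n + shiftN a)) → (γ.1 x).bind (pid L K).1 = none := by
    intro γ hgp hgn
    cases hc : γ.1 x with
    | none => rfl
    | some y =>
      rw [Option.bind_some, pid_apply, if_neg]
      push_neg
      constructor
      · have := γ.2.mono (hgn NM le_rfl) hc (by omega)
        omega
      · have := γ.2.mono hc (hgp NP le_rfl) (by omega)
        omega
  rw [key a hap han, key b hbp hbn]

theorem F_eq_of_c {a b : IZ} (h : ∃ ε : IZ, ε * ε = ε ∧ a * ε = b * ε) : F a = F b := by
  obtain ⟨ε, hε, hab⟩ := h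
  have h1 : F (a * ε) = F (b * ε) := by rw [hab]
  simp only [F, shiftP_mul, shiftN_mul, shiftP_idem ε hε, shiftN_idem ε hε, add_zero] at h1
  exact h1

theorem F_add (a b : IZ) : F (a * b) = F a + F b := by
  simp [F, shiftP_mul, shiftN_mul, Prod.ext_iff]

end IZ

/-- The relation `α 𝔠 β ↔ ∃ idempotent ε, α * ε = β * ε` is a semigroup
congruence on `𝓘↗∞(ℤ)` (the least group congruence), and the quotient is isomorphic to
the direct product `ℤ × ℤ` of two copies of the additive group of integers. -/
theorem statement15 :
    let c : IZ → IZ → Prop := fun α β => ∃ ε : IZ, ε * ε = ε ∧ α * ε = β * ε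
    Equivalence c ∧
    (∀ a b a' b' : IZ, c a b → c a' b' → c (a * a') (b * b')) ∧
    ∃ f : IZ → ℤ × ℤ, Function.Surjective f ∧
      (∀ a b : IZ, f (a * b) = f a + f b) ∧
      (∀ a b : IZ, f a = f b ↔ c a b) := by
  intro c
  have hiff : ∀ a b : IZ, IZ.F a = IZ.F b ↔ c a b :=
    fun a b => ⟨IZ.c_of_F_eq, IZ.F_eq_of_c⟩
  refine ⟨⟨fun a => ⟨1, mul_one 1, rfl⟩,
      fun h => ?_,
      fun h1 h2 => (hiff _ _).mp (((hiff _ _).mpr h1).trans ((hiff _ _).mpr h2))⟩,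
      fun a b a' b' h h' => (hiff _ _).mp ?_,
      IZ.F, IZ.F_surjective, IZ.F_add, fun a b => hiff a b⟩
  · obtain ⟨ε, h1, h2⟩ := h
    exact ⟨ε, h1, h2.symm⟩
  · rw [IZ.F_add, IZ.F_add, (hiff _ _).mpr h, (hiff _ _).mpr h']
end
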